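/- arXiv:2412.09970 — 2 statements merged into one kernel-verified Lean document; each statement's English description precedes it below -/
import Mathlib

section
/- Let K : ℝ³_H → ℝ be integrable on Ω with (1/|Ω|) ∫_Ω K(s) ds = 1, let f : ℝ³_H → ℂ be H-periodic and continuous, and set T(f)(t) = (1/|Ω|) ∫_Ω f(t−s) · K(s) ds and d = (1/|Ω|) ∫_Ω ‖s‖·|K(s)| ds. If d > 0, then for every t ∈ ℝ³_H, | f(t) − T(f)(t) | ≤ ω_f(d) · ( 1 + (1/|Ω|) ∫_Ω |K(s)| ds ). -/
open MeasureTheory Finset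

noncomputable section

/-- Cesàro numbers: `A_n^δ = (δ+1)(δ+2)⋯(δ+n)/n!`, with `A_0^δ = 1`. -/
def cesaroA (δ : ℝ) (n : ℕ) : ℝ :=
  (∏ i ∈ Finset.range n, (δ + i + 1)) / n.factorial

/-- The identification of `ℝ²` with the plane `t₁+t₂+t₃ = 0` in `ℝ³`. -/
def phiH (x : ℝ × ℝ) : ℝ × ℝ × ℝ :=
  ((Real.sqrt 3 * x.1 - x.2) / 2, x.2, -(Real.sqrt 3 * x.1 + x.2) / 2)

/-- The plane `ℝ³_H = {t ∈ ℝ³ : t₁+t₂+t₃ = 0}`. -/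
def planeH : Set (ℝ × ℝ × ℝ) := {t | t.1 + t.2.1 + t.2.2 = 0}

/-- The hexagon `Ω = {t ∈ ℝ³_H : −1 ≤ t₁ < 1, −1 ≤ t₂ < 1, −1 < t₃ ≤ 1}`. -/
def OmegaH : Set (ℝ × ℝ × ℝ) :=
  {t | t.1 + t.2.1 + t.2.2 = 0 ∧ -1 ≤ t.1 ∧ t.1 < 1 ∧ -1 ≤ t.2.1 ∧ t.2.1 < 1 ∧
    -1 < t.2.2 ∧ t.2.2 ≤ 1}

/-- Integral over `Ω`, computed in the coordinates `(x₁, x₂)` of `ℝ²`. -/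
def hexInt (g : (ℝ × ℝ × ℝ) → ℝ) : ℝ := ∫ x in phiH ⁻¹' OmegaH, g (phiH x)

/-- Complex-valued integral over `Ω`, computed in the coordinates `(x₁, x₂)` of `ℝ²`. -/
def hexIntC (g : (ℝ × ℝ × ℝ) → ℂ) : ℂ := ∫ x in phiH ⁻¹' OmegaH, g (phiH x)

/-- The area `|Ω|` of the hexagon. -/
def areaOmega : ℝ := (volume (phiH ⁻¹' OmegaH)).toReal

/-- The function `Θ_n`. -/
def ThetaKer (n : ℕ) (t : ℝ × ℝ × ℝ) : ℝ :=
  (Real.sin ((n + 1) * Real.pi * (t.1 - t.2.1) / 3) *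
      Real.sin ((n + 1) * Real.pi * (t.2.1 - t.2.2) / 3) *
      Real.sin ((n + 1) * Real.pi * (t.2.2 - t.1) / 3)) /
    (Real.sin (Real.pi * (t.1 - t.2.1) / 3) *
      Real.sin (Real.pi * (t.2.1 - t.2.2) / 3) *
      Real.sin (Real.pi * (t.2.2 - t.1) / 3))

/-- The hexagonal Dirichlet kernel `D_n = Θ_n − Θ_{n−1}` (with `Θ_{−1} = 0`). -/
def DKer : ℕ → (ℝ × ℝ × ℝ) → ℝ
  | 0 => ThetaKer 0
  | n + 1 => fun t => ThetaKer (n + 1) t - ThetaKer n t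

/-- The Cesàro kernel `K_n^δ`. -/
def KKer (δ : ℝ) (n : ℕ) (t : ℝ × ℝ × ℝ) : ℝ :=
  (1 / cesaroA δ n) * ∑ k ∈ Finset.range (n + 1), cesaroA (δ - 1) (n - k) * DKer k t

/-- `‖t‖ = max(|t₁|,|t₂|,|t₃|)`. -/
def tnorm (t : ℝ × ℝ × ℝ) : ℝ := max |t.1| (max |t.2.1| |t.2.2|)

/-- `f` is `H`-periodic. -/
def HPeriodic (f : (ℝ × ℝ × ℝ) → ℂ) : Prop :=
  ∀ t ∈ planeH, ∀ s : ℤ × ℤ × ℤ, s.1 + s.2.1 + s.2.2 = 0 →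
    s.1 ≡ s.2.1 [ZMOD 3] → s.2.1 ≡ s.2.2 [ZMOD 3] →
      f (t + ((s.1 : ℝ), (s.2.1 : ℝ), (s.2.2 : ℝ))) = f t

/-- The uniform norm of `f − f(·+t)` over the closed hexagon. -/
def supDiff (f : (ℝ × ℝ × ℝ) → ℂ) (t : ℝ × ℝ × ℝ) : ℝ :=
  sSup ((fun x => ‖f x - f (x + t)‖) '' closure OmegaH)

/-- The modulus of continuity `ω_f`. -/
def modCont (f : (ℝ × ℝ × ℝ) → ℂ) (u : ℝ) : ℝ :=
  sSup {a | ∃ t ∈ planeH, 0 < tnorm t ∧ tnorm t ≤ u ∧ a = supDiff f t}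

/-- The Cesàro `(C,δ)` mean `S_n^δ(f)`. -/
def cesaroMean (δ : ℝ) (n : ℕ) (f : (ℝ × ℝ × ℝ) → ℂ) (t : ℝ × ℝ × ℝ) : ℂ :=
  ((1 / areaOmega : ℝ) : ℂ) * hexIntC (fun s => f (t - s) * ((KKer δ n s : ℝ) : ℂ))

end



section helpers

lemma mem_planeH {t : ℝ × ℝ × ℝ} : t ∈ planeH ↔ t.1 + t.2.1 + t.2.2 = 0 := Iff.rfl

lemma phiH_mem_planeH (x : ℝ × ℝ) : phiH x ∈ planeH := by
  simp only [phiH, mem_planeH]; ring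

lemma planeH_zero : (0 : ℝ × ℝ × ℝ) ∈ planeH := by simp [mem_planeH]

lemma planeH_add {a b : ℝ × ℝ × ℝ} (ha : a ∈ planeH) (hb : b ∈ planeH) : a + b ∈ planeH := by
  simp only [mem_planeH, Prod.fst_add, Prod.snd_add] at *; linarith

lemma planeH_sub {a b : ℝ × ℝ × ℝ} (ha : a ∈ planeH) (hb : b ∈ planeH) : a - b ∈ planeH := by
  simp only [mem_planeH, Prod.fst_sub, Prod.snd_sub] at *; linarith

lemma planeH_smul {a : ℝ × ℝ × ℝ} (c : ℝ) (ha : a ∈ planeH) : c • a ∈ planeH := by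
  simp only [mem_planeH, Prod.smul_fst, Prod.smul_snd, smul_eq_mul] at *
  linear_combination c * ha

lemma omegaH_mem_planeH {t : ℝ × ℝ × ℝ} (h : t ∈ OmegaH) : t ∈ planeH := h.1

lemma tnorm_nonneg (t : ℝ × ℝ × ℝ) : 0 ≤ tnorm t :=
  le_trans (abs_nonneg _) (le_max_left _ _)

lemma tnorm_pos {t : ℝ × ℝ × ℝ} (h : t ≠ 0) : 0 < tnorm t := by
  rcases (tnorm_nonneg t).lt_or_eq with h' | h'
  · exact h'
  · exfalso; apply h
    have h1 : |t.1| ≤ 0 := by rw [h']; simp only [tnorm]; exact le_max_left _ _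
    have h2 : |t.2.1| ≤ 0 := by
      rw [h']; simp only [tnorm]; exact le_trans (le_max_left _ _) (le_max_right _ _)
    have h3 : |t.2.2| ≤ 0 := by
      rw [h']; simp only [tnorm]; exact le_trans (le_max_right _ _) (le_max_right _ _)
    have e1 : t.1 = 0 := abs_eq_zero.mp (le_antisymm h1 (abs_nonneg _))
    have e2 : t.2.1 = 0 := abs_eq_zero.mp (le_antisymm h2 (abs_nonneg _))
    have e3 : t.2.2 = 0 := abs_eq_zero.mp (le_antisymm h3 (abs_nonneg _))
    exact Prod.ext e1 (Prod.ext e2 e3)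

lemma tnorm_smul (c : ℝ) (hc : 0 ≤ c) (t : ℝ × ℝ × ℝ) : tnorm (c • t) = c * tnorm t := by
  obtain ⟨a, b, e⟩ := t
  simp only [tnorm, Prod.smul_mk, smul_eq_mul, abs_mul, abs_of_nonneg hc]
  rw [mul_max_of_nonneg _ _ hc, mul_max_of_nonneg _ _ hc]

lemma tiling {t : ℝ × ℝ × ℝ} (ht : t ∈ planeH) :
    ∃ m k j : ℤ, m + k + j = 0 ∧ m ≡ k [ZMOD 3] ∧ k ≡ j [ZMOD 3] ∧
      t - ((m : ℝ), (k : ℝ), (j : ℝ)) ∈ OmegaH := by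
  obtain ⟨t1, t2, t3⟩ := t
  rw [mem_planeH] at ht
  simp only at ht
  have h1 : (⌊t1⌋ : ℝ) ≤ t1 := Int.floor_le t1
  have h2 : t1 < ⌊t1⌋ + 1 := Int.lt_floor_add_one t1
  have h3 : (⌊t2⌋ : ℝ) ≤ t2 := Int.floor_le t2
  have h4 : t2 < ⌊t2⌋ + 1 := Int.lt_floor_add_one t2
  have key : ∀ m k : ℤ, m % 3 = k % 3 → -1 ≤ t1 - m → t1 - m < 1 → -1 ≤ t2 - k → t2 - k < 1 →
      -1 ≤ (t1 - m) + (t2 - k) → (t1 - m) + (t2 - k) < 1 →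
      ∃ m' k' j' : ℤ, m' + k' + j' = 0 ∧ m' ≡ k' [ZMOD 3] ∧ k' ≡ j' [ZMOD 3] ∧
        ((t1, t2, t3) - ((m' : ℝ), (k' : ℝ), (j' : ℝ))) ∈ OmegaH := by
    intro m k hmk a b c dd e g
    refine ⟨m, k, -m - k, by ring, hmk, by show k % 3 = (-m - k) % 3; omega, ?_⟩
    simp only [OmegaH, Set.mem_setOf_eq, Prod.mk_sub_mk]
    push_cast
    refine ⟨by linarith, by linarith, by linarith, by linarith, by linarith, by linarith,
      by linarith⟩
  rcases (show (⌊t1⌋ - ⌊t2⌋) % 3 = 0 ∨ (⌊t1⌋ - ⌊t2⌋) % 3 = 1 ∨ (⌊t1⌋ - ⌊t2⌋) % 3 = 2 by omega)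
    with hr | hr | hr
  · rcases lt_or_ge ((t1 - ⌊t1⌋) + (t2 - ⌊t2⌋)) 1 with hlt | hge
    · exact key ⌊t1⌋ ⌊t2⌋ (by omega) (by linarith) (by linarith) (by linarith) (by linarith)
        (by linarith) (by linarith)
    · refine key (⌊t1⌋ + 1) (⌊t2⌋ + 1) (by omega) ?_ ?_ ?_ ?_ ?_ ?_ <;> push_cast <;> linarith
  · refine key ⌊t1⌋ (⌊t2⌋ + 1) (by omega) ?_ ?_ ?_ ?_ ?_ ?_ <;> push_cast <;> linarith
  · refine key (⌊t1⌋ + 1) ⌊t2⌋ (by omega) ?_ ?_ ?_ ?_ ?_ ?_ <;> push_cast <;> linarith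

lemma exists_reduce (f : (ℝ × ℝ × ℝ) → ℂ) (hf : HPeriodic f) {w : ℝ × ℝ × ℝ}
    (hw : w ∈ planeH) : ∃ x ∈ OmegaH, f w = f x ∧ ∀ τ ∈ planeH, f (w + τ) = f (x + τ) := by
  obtain ⟨m, k, j, hs, h12, h23, hmem⟩ := tiling hw
  set v : ℝ × ℝ × ℝ := ((m : ℝ), (k : ℝ), (j : ℝ)) with hv
  set x := w - v with hx
  have hxp : x ∈ planeH := hmem.1
  have hxv : x + v = w := sub_add_cancel _ _
  refine ⟨x, hmem, ?_, ?_⟩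
  · have e1 : f (x + v) = f x := hf _ hxp (m, k, j) hs h12 h23
    rw [hxv] at e1; exact e1
  · intro τ hτ
    have e2 : f ((x + τ) + v) = f (x + τ) := hf _ (planeH_add hxp hτ) (m, k, j) hs h12 h23
    rw [add_right_comm, hxv] at e2; exact e2

lemma closure_OmegaH_subset : closure OmegaH ⊆ planeH :=
  closure_minimal (fun t ht => ht.1)
    (isClosed_eq (by fun_prop) continuous_const)

lemma exists_bound (f : (ℝ × ℝ × ℝ) → ℂ) (hf : HPeriodic f) (hfc : ContinuousOn f planeH) :
    ∃ C : ℝ, 0 ≤ C ∧ ∀ w ∈ planeH, ‖f w‖ ≤ C := by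
  have hOsub : OmegaH ⊆ Metric.closedBall 0 1 := by
    intro x hx
    obtain ⟨hs, a1, a2, b1, b2, c1, c2⟩ := hx
    simp only [Metric.mem_closedBall, dist_zero_right, Prod.norm_def, Real.norm_eq_abs]
    refine max_le (abs_le.mpr ⟨a1, le_of_lt a2⟩) (max_le (abs_le.mpr ⟨b1, le_of_lt b2⟩)
      (abs_le.mpr ⟨le_of_lt c1, c2⟩))
  have hcc : IsCompact (closure OmegaH) :=
    (isCompact_closedBall (0 : ℝ × ℝ × ℝ) 1).of_isClosed_subset isClosed_closure
      (closure_minimal hOsub Metric.isClosed_closedBall)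
  obtain ⟨C, hC⟩ := hcc.exists_bound_of_continuousOn (hfc.mono closure_OmegaH_subset)
  refine ⟨max C 0, le_max_right _ _, fun w hw => ?_⟩
  obtain ⟨x, hx, hfeq, -⟩ := exists_reduce f hf hw
  calc ‖f w‖ = ‖f x‖ := by rw [hfeq]
  _ ≤ C := hC x (subset_closure hx)
  _ ≤ max C 0 := le_max_left _ _

lemma supDiff_nonneg (f : (ℝ × ℝ × ℝ) → ℂ) (τ : ℝ × ℝ × ℝ) : 0 ≤ supDiff f τ :=
  Real.sSup_nonneg (by rintro a ⟨x, -, rfl⟩; exact norm_nonneg _)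

lemma image_bdd (f : (ℝ × ℝ × ℝ) → ℂ) {C : ℝ}
    (hC : ∀ w ∈ planeH, ‖f w‖ ≤ C) {τ : ℝ × ℝ × ℝ} (hτ : τ ∈ planeH) :
    ∀ a ∈ (fun x => ‖f x - f (x + τ)‖) '' closure OmegaH, a ≤ 2 * C := by
  rintro a ⟨x, hx, rfl⟩
  have hxp : x ∈ planeH := closure_OmegaH_subset hx
  calc ‖f x - f (x + τ)‖ ≤ ‖f x‖ + ‖f (x + τ)‖ := by
        simpa using norm_sub_le (f x) (f (x + τ))
  _ ≤ C + C := add_le_add (hC x hxp) (hC _ (planeH_add hxp hτ))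
  _ = 2 * C := by ring

lemma supDiff_le_bound (f : (ℝ × ℝ × ℝ) → ℂ) {C : ℝ} (hC0 : 0 ≤ C)
    (hC : ∀ w ∈ planeH, ‖f w‖ ≤ C) {τ : ℝ × ℝ × ℝ} (hτ : τ ∈ planeH) :
    supDiff f τ ≤ 2 * C :=
  Real.sSup_le (image_bdd f hC hτ) (by linarith)

lemma abs_le_supDiff (f : (ℝ × ℝ × ℝ) → ℂ) (hf : HPeriodic f) {C : ℝ}
    (hC : ∀ w ∈ planeH, ‖f w‖ ≤ C) {w τ : ℝ × ℝ × ℝ}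
    (hw : w ∈ planeH) (hτ : τ ∈ planeH) :
    ‖f w - f (w + τ)‖ ≤ supDiff f τ := by
  obtain ⟨x, hx, hfeq, hfeq2⟩ := exists_reduce f hf hw
  rw [hfeq, hfeq2 τ hτ]
  exact le_csSup ⟨2 * C, fun a ha => image_bdd f hC hτ a ha⟩ ⟨x, subset_closure hx, rfl⟩

lemma modCont_nonneg (f : (ℝ × ℝ × ℝ) → ℂ) (u : ℝ) : 0 ≤ modCont f u :=
  Real.sSup_nonneg (by rintro a ⟨τ, -, -, -, rfl⟩; exact supDiff_nonneg f τ)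

lemma supDiff_le_modCont (f : (ℝ × ℝ × ℝ) → ℂ) {C : ℝ} (hC0 : 0 ≤ C)
    (hC : ∀ w ∈ planeH, ‖f w‖ ≤ C) {τ : ℝ × ℝ × ℝ} {d : ℝ}
    (hτ : τ ∈ planeH) (h1 : 0 < tnorm τ) (h2 : tnorm τ ≤ d) :
    supDiff f τ ≤ modCont f d := by
  apply le_csSup
  · refine ⟨2 * C, ?_⟩
    rintro a ⟨σ, hσ, -, -, rfl⟩
    exact supDiff_le_bound f hC0 hC hσ
  · exact ⟨τ, hτ, h1, h2, rfl⟩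

lemma stepBound (f : (ℝ × ℝ × ℝ) → ℂ) (hf : HPeriodic f) {C : ℝ} (hC0 : 0 ≤ C)
    (hC : ∀ w ∈ planeH, ‖f w‖ ≤ C) {d : ℝ} (hd : 0 < d)
    (t τ : ℝ × ℝ × ℝ) (ht : t ∈ planeH) (hτ : τ ∈ planeH) :
    ‖f t - f (t - τ)‖ ≤ (1 + tnorm τ / d) * modCont f d := by
  by_cases hτ0 : τ = 0
  · subst hτ0
    simp only [sub_zero, sub_self, norm_zero]
    have h1 := modCont_nonneg f d
    have h2 : (0:ℝ) ≤ tnorm (0 : ℝ × ℝ × ℝ) / d := div_nonneg (tnorm_nonneg _) hd.le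
    nlinarith
  · have hpos : 0 < tnorm τ := tnorm_pos hτ0
    set n := ⌈tnorm τ / d⌉₊ with hn
    have hn0 : 0 < n := Nat.ceil_pos.mpr (by positivity)
    have hne : ((n : ℝ)) ≠ 0 := by positivity
    set σ := ((n : ℝ))⁻¹ • τ with hσdef
    have hσp : σ ∈ planeH := planeH_smul _ hτ
    have hσn : tnorm σ = (n : ℝ)⁻¹ * tnorm τ := tnorm_smul _ (by positivity) _
    have hσpos : 0 < tnorm σ := by rw [hσn]; positivity
    have hσle : tnorm σ ≤ d := by
      rw [hσn, inv_mul_le_iff₀ (by positivity : (0:ℝ) < (n:ℝ))]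
      have hceil : tnorm τ / d ≤ (n : ℝ) := Nat.le_ceil _
      have heq : tnorm τ = (tnorm τ / d) * d := (div_mul_cancel₀ _ hd.ne').symm
      nlinarith [hd.le]
    have hnσ : (n : ℝ) • σ = τ := by
      rw [hσdef, smul_smul, mul_inv_cancel₀ hne, one_smul]
    have htel : f t - f (t - τ) =
        ∑ i ∈ Finset.range n, (f (t - (i : ℝ) • σ) - f (t - ((i : ℝ) + 1) • σ)) := by
      calc f t - f (t - τ)
          = (fun i : ℕ => f (t - (i : ℝ) • σ)) 0 - (fun i : ℕ => f (t - (i : ℝ) • σ)) n := by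
            simp only [Nat.cast_zero, zero_smul, sub_zero, hnσ]
      _ = ∑ i ∈ Finset.range n,
            ((fun i : ℕ => f (t - (i : ℝ) • σ)) i - (fun i : ℕ => f (t - (i : ℝ) • σ)) (i + 1)) :=
            (Finset.sum_range_sub' (fun i : ℕ => f (t - (i : ℝ) • σ)) n).symm
      _ = ∑ i ∈ Finset.range n, (f (t - (i : ℝ) • σ) - f (t - ((i : ℝ) + 1) • σ)) := by
            apply Finset.sum_congr rfl; intro i _
            push_cast; ring_nf
    rw [htel]
    have hterm : ∀ i : ℕ, ‖f (t - (i : ℝ) • σ) - f (t - ((i : ℝ) + 1) • σ)‖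
        ≤ modCont f d := by
      intro i
      set w := t - ((i : ℝ) + 1) • σ with hw
      have hwp : w ∈ planeH := planeH_sub ht (planeH_smul ((i : ℝ) + 1) hσp)
      have hws : w + σ = t - (i : ℝ) • σ := by
        rw [hw, add_smul, one_smul]; abel
      calc ‖f (t - (i : ℝ) • σ) - f (t - ((i : ℝ) + 1) • σ)‖
          = ‖f w - f (w + σ)‖ := by rw [hws, norm_sub_rev]
      _ ≤ supDiff f σ := abs_le_supDiff f hf hC hwp hσp
      _ ≤ modCont f d := supDiff_le_modCont f hC0 hC hσp hσpos hσle
    calc ‖∑ i ∈ Finset.range n, (f (t - (i : ℝ) • σ) - f (t - ((i : ℝ) + 1) • σ))‖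
        ≤ ∑ i ∈ Finset.range n,
            ‖f (t - (i : ℝ) • σ) - f (t - ((i : ℝ) + 1) • σ)‖ :=
          norm_sum_le _ _
    _ ≤ ∑ _i ∈ Finset.range n, modCont f d := Finset.sum_le_sum (fun i _ => hterm i)
    _ = n * modCont f d := by rw [Finset.sum_const, Finset.card_range, nsmul_eq_mul]
    _ ≤ (1 + tnorm τ / d) * modCont f d := by
        apply mul_le_mul_of_nonneg_right _ (modCont_nonneg f d)
        have := Nat.ceil_lt_add_one (show (0:ℝ) ≤ tnorm τ / d by positivity)
        rw [← hn] at this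
        linarith

end helpers

open MeasureTheory in
theorem stmt_6 (K : (ℝ × ℝ × ℝ) → ℝ)
    (hKint : IntegrableOn (fun x => K (phiH x)) (phiH ⁻¹' OmegaH) volume)
    (hKnorm : (1 / areaOmega) * hexInt K = 1)
    (f : (ℝ × ℝ × ℝ) → ℂ) (hf : HPeriodic f) (hfc : ContinuousOn f planeH)
    (d : ℝ) (hd : d = (1 / areaOmega) * hexInt (fun s => tnorm s * |K s|)) (hdpos : 0 < d) :
    ∀ t ∈ planeH,
      ‖(f t - ((1 / areaOmega : ℝ) : ℂ) * hexIntC (fun s => f (t - s) * ((K s : ℝ) : ℂ)))‖ ≤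
        modCont f d * (1 + (1 / areaOmega) * hexInt (fun s => |K s|)) := by
  intro t ht
  obtain ⟨C, hC0, hC⟩ := exists_bound f hf hfc
  set S := phiH ⁻¹' OmegaH with hS
  have ha : (0:ℝ) ≤ 1 / areaOmega := by
    unfold areaOmega; positivity
  have hd0 : d ≠ 0 := ne_of_gt hdpos
  set M' := modCont f d with hM'
  -- integrability of tnorm * |K|
  have hItn : Integrable (fun x => tnorm (phiH x) * |K (phiH x)|) (volume.restrict S) := by
    by_contra hcon
    have h0 : hexInt (fun s => tnorm s * |K s|) = 0 := by
      unfold hexInt; exact integral_undef hcon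
    rw [h0, mul_zero] at hd
    exact hd0 hd
  have hphi : Continuous phiH := by unfold phiH; fun_prop
  have hfmeas : Continuous (fun x : ℝ × ℝ => f (t - phiH x)) :=
    hfc.comp_continuous (continuous_const.sub hphi)
      (fun x => planeH_sub ht (phiH_mem_planeH x))
  have I1 : Integrable (fun x => f t * ((K (phiH x) : ℝ) : ℂ)) (volume.restrict S) :=
    (hKint.ofReal).const_mul _
  have I2 : Integrable (fun x => f (t - phiH x) * ((K (phiH x) : ℝ) : ℂ))
      (volume.restrict S) :=
    Integrable.bdd_mul (hKint.ofReal) hfmeas.aestronglyMeasurable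
      (Filter.Eventually.of_forall fun x => by
        exact hC _ (planeH_sub ht (phiH_mem_planeH x)))
  have key : f t - ((1 / areaOmega : ℝ) : ℂ) * hexIntC (fun s => f (t - s) * ((K s : ℝ) : ℂ)) =
      ((1 / areaOmega : ℝ) : ℂ) *
        ∫ x in S, (f t - f (t - phiH x)) * ((K (phiH x) : ℝ) : ℂ) := by
    have e1 : (∫ x in S, (f t - f (t - phiH x)) * ((K (phiH x) : ℝ) : ℂ)) =
        (∫ x in S, f t * ((K (phiH x) : ℝ) : ℂ))
          - ∫ x in S, f (t - phiH x) * ((K (phiH x) : ℝ) : ℂ) := by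
      rw [← integral_sub I1 I2]
      congr 1; ext x; ring
    have e2 : (∫ x in S, f t * ((K (phiH x) : ℝ) : ℂ)) = f t * ((hexInt K : ℝ) : ℂ) := by
      rw [integral_const_mul]
      congr 1
      exact integral_ofReal
    have e3 : ((1 / areaOmega : ℝ) : ℂ) * (f t * ((hexInt K : ℝ) : ℂ)) = f t := by
      rw [show ((1 / areaOmega : ℝ) : ℂ) * (f t * ((hexInt K : ℝ) : ℂ))
          = f t * (((1 / areaOmega) * hexInt K : ℝ) : ℂ) by push_cast; ring, hKnorm]
      simp
    rw [e1, mul_sub, e2, e3]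
    rfl
  rw [key]
  have hpt : ∀ x : ℝ × ℝ, ‖(f t - f (t - phiH x)) * ((K (phiH x) : ℝ) : ℂ)‖ ≤
      M' * |K (phiH x)| + (M' / d) * (tnorm (phiH x) * |K (phiH x)|) := by
    intro x
    rw [norm_mul, Complex.norm_real, Real.norm_eq_abs]
    have h1 : ‖f t - f (t - phiH x)‖ ≤ (1 + tnorm (phiH x) / d) * M' :=
      stepBound f hf hC0 hC hdpos t (phiH x) ht (phiH_mem_planeH x)
    calc ‖f t - f (t - phiH x)‖ * |K (phiH x)|
        ≤ ((1 + tnorm (phiH x) / d) * M') * |K (phiH x)| :=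
          mul_le_mul_of_nonneg_right h1 (abs_nonneg _)
    _ = M' * |K (phiH x)| + (M' / d) * (tnorm (phiH x) * |K (phiH x)|) := by ring
  have hBint : Integrable
      (fun x => M' * |K (phiH x)| + (M' / d) * (tnorm (phiH x) * |K (phiH x)|))
      (volume.restrict S) :=
    (hKint.abs.const_mul M').add (hItn.const_mul (M' / d))
  have hJ : ‖∫ x in S, (f t - f (t - phiH x)) * ((K (phiH x) : ℝ) : ℂ)‖ ≤
      ∫ x in S, (M' * |K (phiH x)| + (M' / d) * (tnorm (phiH x) * |K (phiH x)|)) := by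
    calc ‖∫ x in S, (f t - f (t - phiH x)) * ((K (phiH x) : ℝ) : ℂ)‖
        = ‖∫ x in S, (f t - f (t - phiH x)) * ((K (phiH x) : ℝ) : ℂ)‖ :=
          rfl
    _ ≤ ∫ x in S, ‖(f t - f (t - phiH x)) * ((K (phiH x) : ℝ) : ℂ)‖ :=
          norm_integral_le_integral_norm _
    _ ≤ ∫ x in S, (M' * |K (phiH x)| + (M' / d) * (tnorm (phiH x) * |K (phiH x)|)) :=
          integral_mono_of_nonneg (Filter.Eventually.of_forall fun x => norm_nonneg _)
            hBint (Filter.Eventually.of_forall hpt)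
  calc ‖((1 / areaOmega : ℝ) : ℂ) *
          ∫ x in S, (f t - f (t - phiH x)) * ((K (phiH x) : ℝ) : ℂ)‖
      = (1 / areaOmega) *
          ‖∫ x in S, (f t - f (t - phiH x)) * ((K (phiH x) : ℝ) : ℂ)‖ := by
        rw [norm_mul, Complex.norm_real, Real.norm_eq_abs, abs_of_nonneg ha]
  _ ≤ (1 / areaOmega) *
        ∫ x in S, (M' * |K (phiH x)| + (M' / d) * (tnorm (phiH x) * |K (phiH x)|)) :=
        mul_le_mul_of_nonneg_left hJ ha
  _ = (1 / areaOmega) * (M' * hexInt (fun s => |K s|)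
        + (M' / d) * hexInt (fun s => tnorm s * |K s|)) := by
        rw [integral_add (hKint.abs.const_mul M') (hItn.const_mul (M' / d)),
          integral_const_mul, integral_const_mul]
        rfl
  _ = modCont f d * (1 + (1 / areaOmega) * hexInt (fun s => |K s|)) := by
        have h2 : (1 / areaOmega) * ((M' / d) * hexInt (fun s => tnorm s * |K s|)) = M' := by
          rw [show (1 / areaOmega) * ((M' / d) * hexInt (fun s => tnorm s * |K s|))
            = (M' / d) * ((1 / areaOmega) * hexInt (fun s => tnorm s * |K s|)) by ring,
            ← hd, div_mul_cancel₀ _ hd0]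
        rw [mul_add, h2, hM']
        ring
end

section
/- There exists an absolute constant C > 0 such that for every r with 1/2 ≤ r < 1, ∫_Ω ‖t‖ · P_r(t) dt ≤ C · (1−r) · |log(1−r)|, where ‖t‖ = max(|t1|,|t2|,|t3|). -/
open MeasureTheory Finset

/-- `q_r(x) = 1 − 2r·cos x + r²`. -/
noncomputable def qr (r x : ℝ) : ℝ := 1 - 2 * r * Real.cos x + r ^ 2

/-- The hexagonal Poisson kernel `P_r`. -/
noncomputable def PKer (r : ℝ) (t : ℝ × ℝ × ℝ) : ℝ :=
  (1 - r) ^ 3 * (1 - r ^ 3) /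
      (qr r (2 * Real.pi * (t.1 - t.2.1) / 3) * qr r (2 * Real.pi * (t.2.1 - t.2.2) / 3) *
        qr r (2 * Real.pi * (t.2.2 - t.1) / 3)) +
    r * (1 - r) ^ 2 /
      (qr r (2 * Real.pi * (t.1 - t.2.1) / 3) * qr r (2 * Real.pi * (t.2.1 - t.2.2) / 3)) +
    r * (1 - r) ^ 2 /
      (qr r (2 * Real.pi * (t.2.1 - t.2.2) / 3) * qr r (2 * Real.pi * (t.2.2 - t.1) / 3)) +
    r * (1 - r) ^ 2 /
      (qr r (2 * Real.pi * (t.2.2 - t.1) / 3) * qr r (2 * Real.pi * (t.1 - t.2.1) / 3))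

open scoped ENNReal

namespace Stmt18Aux


lemma aux_cos {s : ℝ} (h : |s| ≤ 4 * Real.pi / 3) : s ^ 2 / 32 ≤ 1 - Real.cos s := by
  have hπ3 : (3 : ℝ) < Real.pi := Real.pi_gt_three
  have hπ4 : Real.pi < 3.15 := Real.pi_lt_d2
  have hp2 : Real.pi ^ 2 ≤ 10 := by nlinarith
  rcases le_or_gt |s| Real.pi with hsπ | hsπ
  · have hb := Real.cos_le_one_sub_mul_cos_sq hsπ
    have h132 : (1 : ℝ) / 32 ≤ 2 / Real.pi ^ 2 := by
      rw [div_le_div_iff₀ (by norm_num) (by positivity)]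
      nlinarith
    calc s ^ 2 / 32 = 1 / 32 * s ^ 2 := by ring
      _ ≤ 2 / Real.pi ^ 2 * s ^ 2 := mul_le_mul_of_nonneg_right h132 (sq_nonneg s)
      _ ≤ 1 - Real.cos s := by linarith
  · have h1 : Real.cos s = Real.cos |s| := (Real.cos_abs s).symm
    have h2 : Real.cos |s| ≤ 0 :=
      Real.cos_nonpos_of_pi_div_two_le_of_le (by linarith) (by linarith)
    have h3 : s ^ 2 ≤ (4 * Real.pi / 3) ^ 2 := by
      rw [← sq_abs s]
      exact pow_le_pow_left₀ (abs_nonneg s) h 2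
    nlinarith

lemma qr_pos {r : ℝ} (h0 : 0 ≤ r) (h1 : r < 1) (s : ℝ) : 0 < qr r s := by
  have h2 : Real.cos s ≤ 1 := Real.cos_le_one s
  have h3 : (0 : ℝ) < (1 - r) ^ 2 := pow_pos (by linarith) 2
  unfold qr
  nlinarith [mul_nonneg h0 (sub_nonneg.2 h2)]

lemma qr_lower {r s : ℝ} (hr : 1 / 2 ≤ r) (hr1 : r < 1) (h : |s| ≤ 4 * Real.pi / 3) :
    (1 - r) ^ 2 + s ^ 2 / 32 ≤ qr r s := by
  have h1 := aux_cos h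
  have h2 : 0 ≤ 1 - Real.cos s := le_trans (by positivity) h1
  have h3 : 0 ≤ (2 * r - 1) * (1 - Real.cos s) := mul_nonneg (by linarith) h2
  unfold qr
  nlinarith


lemma lintegral_comp_affine {F : ℝ → ℝ≥0∞} (hF : Measurable F) {b : ℝ} (hb : b ≠ 0) (A : ℝ) :
    ∫⁻ t : ℝ, F (A + b * t) = ENNReal.ofReal |b⁻¹| * ∫⁻ s, F s := by
  have hmap : Measure.map (fun t : ℝ => A + b * t) volume
      = ENNReal.ofReal |b⁻¹| • volume := by
    have hcomp : (fun t : ℝ => A + b * t) = (fun y : ℝ => A + y) ∘ (fun t : ℝ => b * t) := rfl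
    rw [hcomp, ← Measure.map_map (measurable_const_add A) (measurable_const_mul b),
      Real.map_volume_mul_left hb, Measure.map_smul,
      map_add_left_eq_self volume A]
  calc ∫⁻ t : ℝ, F (A + b * t)
      = ∫⁻ y, F y ∂(Measure.map (fun t : ℝ => A + b * t) volume) :=
        (lintegral_map hF (by fun_prop)).symm
    _ = ENNReal.ofReal |b⁻¹| * ∫⁻ s, F s := by rw [hmap, lintegral_smul_measure, smul_eq_mul]

lemma lintegral_comp_affine_le {F : ℝ → ℝ≥0∞} (hF : Measurable F) {b : ℝ} (hb : 1 ≤ |b|)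
    (A : ℝ) : ∫⁻ t : ℝ, F (A + b * t) ≤ ∫⁻ s, F s := by
  have hb0 : (0:ℝ) < |b| := lt_of_lt_of_le one_pos hb
  have hbne : b ≠ 0 := fun h => by simp [h] at hb0
  rw [lintegral_comp_affine hF hbne A]
  have h1 : |b⁻¹| ≤ 1 := by
    rw [abs_inv, inv_eq_one_div, div_le_one hb0]; exact hb
  calc ENNReal.ofReal |b⁻¹| * ∫⁻ s, F s ≤ 1 * ∫⁻ s, F s := by
        apply mul_le_mul_left
        simpa using ENNReal.ofReal_le_ofReal h1
    _ = ∫⁻ s, F s := one_mul _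

lemma prodP2 {F G : ℝ → ℝ≥0∞} (hF : Measurable F) (hG : Measurable G)
    (a : ℝ) {b c : ℝ} (hb : 1 ≤ |b|) (hc : 1 ≤ |c|) :
    ∫⁻ x : ℝ × ℝ, F (a * x.1 + b * x.2) * G (c * x.1) ≤ (∫⁻ s, F s) * ∫⁻ s, G s := by
  have hmeas : Measurable fun x : ℝ × ℝ => F (a * x.1 + b * x.2) * G (c * x.1) :=
    (hF.comp (by fun_prop)).mul (hG.comp (by fun_prop))
  rw [Measure.volume_eq_prod, lintegral_prod _ hmeas.aemeasurable]
  have step1 : ∀ s : ℝ, ∫⁻ t, F (a * s + b * t) * G (c * s) ≤ G (c * s) * ∫⁻ z, F z := by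
    intro s
    calc ∫⁻ t, F (a * s + b * t) * G (c * s)
        = G (c * s) * ∫⁻ t, F (a * s + b * t) := by
          simp_rw [mul_comm (F _) (G (c * s))]
          exact lintegral_const_mul _ (hF.comp (by fun_prop))
      _ ≤ G (c * s) * ∫⁻ z, F z := mul_le_mul_right (lintegral_comp_affine_le hF hb _) _
  calc ∫⁻ s, ∫⁻ t, F (a * s + b * t) * G (c * s)
      ≤ ∫⁻ s, G (c * s) * ∫⁻ z, F z := lintegral_mono step1
    _ = (∫⁻ z, F z) * ∫⁻ s, G (c * s) := by
        simp_rw [mul_comm (G _) _]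
        exact lintegral_const_mul _ (hG.comp (by fun_prop))
    _ ≤ (∫⁻ z, F z) * ∫⁻ z, G z := by
        apply mul_le_mul_right
        have h := lintegral_comp_affine_le hG hc (0:ℝ)
        simpa using h

lemma prodP1 {F G : ℝ → ℝ≥0∞} (hF : Measurable F) (hG : Measurable G)
    {a b : ℝ} (ha : 1 ≤ |2 * a|) (hb : 1 ≤ |b|) :
    ∫⁻ x : ℝ × ℝ, F (a * x.1 - b * x.2) * G (a * x.1 + b * x.2)
      ≤ (∫⁻ s, F s) * ∫⁻ s, G s := by
  have hmeas : Measurable fun x : ℝ × ℝ => F (a * x.1 - b * x.2) * G (a * x.1 + b * x.2) :=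
    (hF.comp (by fun_prop)).mul (hG.comp (by fun_prop))
  rw [Measure.volume_eq_prod, lintegral_prod _ hmeas.aemeasurable]
  have step1 : ∀ s : ℝ, ∫⁻ t, F (a * s - b * t) * G (a * s + b * t)
      ≤ ∫⁻ z, F (2 * a * s - z) * G z := by
    intro s
    have hrw : (fun t : ℝ => F (a * s - b * t) * G (a * s + b * t))
        = fun t : ℝ => (fun z => F (2 * a * s - z) * G z) (a * s + b * t) := by
      funext t; simp only; congr 2; ring
    rw [hrw]
    exact lintegral_comp_affine_le ((hF.comp (by fun_prop)).mul hG) hb _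
  calc ∫⁻ s, ∫⁻ t, F (a * s - b * t) * G (a * s + b * t)
      ≤ ∫⁻ s, ∫⁻ z, F (2 * a * s - z) * G z := lintegral_mono step1
    _ = ∫⁻ z, ∫⁻ s, F (2 * a * s - z) * G z := lintegral_lintegral_swap
        (((hF.comp (by fun_prop)).mul (hG.comp (by fun_prop))).aemeasurable)
    _ = ∫⁻ z, G z * ∫⁻ s, F (2 * a * s - z) := by
        refine lintegral_congr fun z => ?_
        simp_rw [mul_comm (F _) (G z)]
        exact lintegral_const_mul _ (hF.comp (by fun_prop))
    _ ≤ ∫⁻ z, G z * ∫⁻ w, F w := by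
        refine lintegral_mono fun z => mul_le_mul_right ?_ _
        have hrw : (fun s : ℝ => F (2 * a * s - z)) = fun s : ℝ => F (-z + (2 * a) * s) := by
          funext s; congr 1; ring
        rw [hrw]
        exact lintegral_comp_affine_le hF ha _
    _ = (∫⁻ w, F w) * ∫⁻ z, G z := by
        simp_rw [mul_comm (G _) _]
        exact lintegral_const_mul _ hG



noncomputable def MB : ℝ := 4 * Real.pi / 3
noncomputable def mfun (ε s : ℝ) : ℝ := ε / (ε ^ 2 + s ^ 2 / 32)
noncomputable def lfun (ε s : ℝ) : ℝ := |s| * ε / (ε ^ 2 + s ^ 2 / 32)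
noncomputable def FM (ε : ℝ) : ℝ → ℝ≥0∞ :=
  (Set.Icc (-MB) MB).indicator fun s => ENNReal.ofReal (mfun ε s)
noncomputable def FL (ε : ℝ) : ℝ → ℝ≥0∞ :=
  (Set.Icc (-MB) MB).indicator fun s => ENNReal.ofReal (lfun ε s)

lemma mfun_nonneg {ε : ℝ} (hε : 0 ≤ ε) (s : ℝ) : 0 ≤ mfun ε s :=
  div_nonneg hε (by positivity)

lemma lfun_nonneg {ε : ℝ} (hε : 0 ≤ ε) (s : ℝ) : 0 ≤ lfun ε s :=
  div_nonneg (mul_nonneg (abs_nonneg _) hε) (by positivity)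

lemma FM_meas (ε : ℝ) : Measurable (FM ε) :=
  Measurable.indicator (by unfold mfun; fun_prop) measurableSet_Icc

lemma FL_meas (ε : ℝ) : Measurable (FL ε) :=
  Measurable.indicator (by unfold lfun; fun_prop) measurableSet_Icc

lemma lintegral_comp_affine' {F : ℝ → ℝ≥0∞} (hF : Measurable F) {b : ℝ} (hb : b ≠ 0) (A : ℝ) :
    ∫⁻ t : ℝ, F (A + b * t) = ENNReal.ofReal |b⁻¹| * ∫⁻ s, F s := by
  have hmap : Measure.map (fun t : ℝ => A + b * t) volume
      = ENNReal.ofReal |b⁻¹| • volume := by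
    have hcomp : (fun t : ℝ => A + b * t) = (fun y : ℝ => A + y) ∘ (fun t : ℝ => b * t) := rfl
    rw [hcomp, ← Measure.map_map (measurable_const_add A) (measurable_const_mul b),
      Real.map_volume_mul_left hb, Measure.map_smul,
      map_add_left_eq_self volume A]
  calc ∫⁻ t : ℝ, F (A + b * t)
      = ∫⁻ y, F y ∂(Measure.map (fun t : ℝ => A + b * t) volume) :=
        (lintegral_map hF (by fun_prop)).symm
    _ = ENNReal.ofReal |b⁻¹| * ∫⁻ s, F s := by rw [hmap, lintegral_smul_measure, smul_eq_mul]

lemma lintegral_Icc_neg {f : ℝ → ℝ≥0∞} (hf : Measurable f) (a b : ℝ) :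
    ∫⁻ s in Set.Icc (-b) (-a), f s = ∫⁻ s in Set.Icc a b, f (-s) := by
  have h := lintegral_comp_affine' (F := (Set.Icc (-b) (-a)).indicator f)
      (hf.indicator measurableSet_Icc) (b := (-1 : ℝ)) (by norm_num) 0
  have h2 : ∫⁻ t, (Set.Icc (-b) (-a)).indicator f (-t)
      = ∫⁻ s, (Set.Icc (-b) (-a)).indicator f s := by
    have e : (fun t : ℝ => (Set.Icc (-b) (-a)).indicator f (0 + -1 * t))
        = fun t : ℝ => (Set.Icc (-b) (-a)).indicator f (-t) := by
      funext t; congr 1; ring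
    rw [e] at h
    rw [h]
    norm_num
  calc ∫⁻ s in Set.Icc (-b) (-a), f s
      = ∫⁻ s, (Set.Icc (-b) (-a)).indicator f s :=
        (lintegral_indicator measurableSet_Icc _).symm
    _ = ∫⁻ t, (Set.Icc (-b) (-a)).indicator f (-t) := h2.symm
    _ = ∫⁻ t, (Set.Icc a b).indicator (fun s => f (-s)) t := by
        refine lintegral_congr fun t => ?_
        rw [Set.indicator_apply, Set.indicator_apply]
        by_cases ht : t ∈ Set.Icc a b
        · rw [if_pos (show -t ∈ Set.Icc (-b) (-a) from ⟨neg_le_neg ht.2, neg_le_neg ht.1⟩),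
            if_pos ht]
        · rw [if_neg (fun hmem => ht ⟨by linarith [hmem.2], by linarith [hmem.1]⟩), if_neg ht]
    _ = ∫⁻ s in Set.Icc a b, f (-s) := lintegral_indicator measurableSet_Icc _

lemma tail_sq {ε a b : ℝ} (hε0 : 0 < ε) (ha : 0 < a) (hab : a ≤ b) :
    ∫⁻ s in Set.Icc a b, ENNReal.ofReal (32 * ε / s ^ 2)
      = ENNReal.ofReal (32 * ε * (a⁻¹ - b⁻¹)) := by
  have hne : ∀ x ∈ Set.Icc a b, x ≠ 0 := fun x hx => ne_of_gt (lt_of_lt_of_le ha hx.1)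
  have hint : IntegrableOn (fun s : ℝ => 32 * ε / s ^ 2) (Set.Icc a b) := by
    apply ContinuousOn.integrableOn_compact isCompact_Icc
    exact ContinuousOn.div continuousOn_const ((continuous_pow 2).continuousOn)
      (fun x hx => pow_ne_zero 2 (hne x hx))
  have hnn : 0 ≤ᵐ[volume.restrict (Set.Icc a b)] fun s : ℝ => 32 * ε / s ^ 2 :=
    Filter.Eventually.of_forall fun s => by positivity
  rw [← ofReal_integral_eq_lintegral_ofReal hint hnn]
  congr 1
  rw [MeasureTheory.integral_Icc_eq_integral_Ioc, ← intervalIntegral.integral_of_le hab]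
  have hrw : ∀ s : ℝ, 32 * ε / s ^ 2 = (32 * ε) * s ^ (-2 : ℤ) := by
    intro s
    rw [zpow_neg, div_eq_mul_inv]
    norm_num
  simp_rw [hrw]
  have h0 : (0 : ℝ) ∉ Set.uIcc a b := by
    rw [Set.uIcc_of_le hab]; exact fun hmem => hne 0 hmem rfl
  rw [intervalIntegral.integral_const_mul, integral_zpow (Or.inr ⟨by norm_num, h0⟩)]
  have hbne : b ≠ 0 := ne_of_gt (lt_of_lt_of_le ha hab)
  have hane : a ≠ 0 := ne_of_gt ha
  norm_num
  left
  ring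

lemma tail_inv {ε a b : ℝ} (hε0 : 0 < ε) (ha : 0 < a) (hab : a ≤ b) :
    ∫⁻ s in Set.Icc a b, ENNReal.ofReal (32 * ε / s)
      = ENNReal.ofReal (32 * ε * Real.log (b / a)) := by
  have hne : ∀ x ∈ Set.Icc a b, x ≠ 0 := fun x hx => ne_of_gt (lt_of_lt_of_le ha hx.1)
  have hint : IntegrableOn (fun s : ℝ => 32 * ε / s) (Set.Icc a b) := by
    apply ContinuousOn.integrableOn_compact isCompact_Icc
    exact ContinuousOn.div continuousOn_const continuousOn_id hne
  have hnn : 0 ≤ᵐ[volume.restrict (Set.Icc a b)] fun s : ℝ => 32 * ε / s :=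
    (ae_restrict_iff' measurableSet_Icc).2 (Filter.Eventually.of_forall fun x hx => by
      have hx0 : 0 < x := lt_of_lt_of_le ha hx.1
      positivity)
  rw [← ofReal_integral_eq_lintegral_ofReal hint hnn]
  congr 1
  rw [MeasureTheory.integral_Icc_eq_integral_Ioc, ← intervalIntegral.integral_of_le hab]
  have hrw : ∀ s : ℝ, 32 * ε / s = (32 * ε) * (1 / s) := fun s => by ring
  simp_rw [hrw]
  have h0 : (0 : ℝ) ∉ Set.uIcc a b := by
    rw [Set.uIcc_of_le hab]; exact fun hmem => hne 0 hmem rfl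
  rw [intervalIntegral.integral_const_mul, integral_one_div h0]

lemma split_lintegral {ε : ℝ} (hε0 : 0 < ε) (hεM : ε ≤ MB) (h : ℝ → ℝ≥0∞) :
    ∫⁻ s in Set.Icc (-MB) MB, h s ≤
      (∫⁻ s in Set.Ioo (-ε) ε, h s) + ((∫⁻ s in Set.Icc (-MB) (-ε), h s)
        + ∫⁻ s in Set.Icc ε MB, h s) := by
  have hsub : Set.Icc (-MB) MB ⊆
      Set.Ioo (-ε) ε ∪ (Set.Icc (-MB) (-ε) ∪ Set.Icc ε MB) := by
    rintro s ⟨hs1, hs2⟩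
    rcases le_or_gt ε s with hc | hc
    · exact Or.inr (Or.inr ⟨hc, hs2⟩)
    · rcases lt_or_ge (-ε) s with hc' | hc'
      · exact Or.inl ⟨hc', hc⟩
      · exact Or.inr (Or.inl ⟨hs1, hc'⟩)
  refine le_trans (lintegral_mono_set hsub) ?_
  refine le_trans (lintegral_union_le _ _ _) ?_
  exact add_le_add_right (lintegral_union_le _ _ _) _

lemma intFM {ε : ℝ} (hε0 : 0 < ε) (hε2 : ε ≤ 1 / 2) :
    ∫⁻ s, FM ε s ≤ ENNReal.ofReal 100 := by
  have hπ3 : (3 : ℝ) < Real.pi := Real.pi_gt_three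
  have hM4 : (4 : ℝ) ≤ MB := by unfold MB; linarith
  have hεM : ε ≤ MB := by linarith
  unfold FM
  rw [lintegral_indicator measurableSet_Icc]
  refine le_trans (split_lintegral hε0 hεM _) ?_
  have hp1 : ∫⁻ s in Set.Ioo (-ε) ε, ENNReal.ofReal (mfun ε s) ≤ ENNReal.ofReal 2 := by
    calc ∫⁻ s in Set.Ioo (-ε) ε, ENNReal.ofReal (mfun ε s)
        ≤ ∫⁻ _ in Set.Ioo (-ε) ε, ENNReal.ofReal (1 / ε) :=
          setLIntegral_mono measurable_const (fun s _ => ENNReal.ofReal_le_ofReal (by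
            unfold mfun
            rw [div_le_div_iff₀ (by positivity) hε0]
            nlinarith [sq_nonneg s]))
      _ = ENNReal.ofReal (1 / ε) * volume (Set.Ioo (-ε) ε) := setLIntegral_const _ _
      _ = ENNReal.ofReal (1 / ε) * ENNReal.ofReal (2 * ε) := by
          rw [Real.volume_Ioo]; congr 1; ring
      _ = ENNReal.ofReal (1 / ε * (2 * ε)) := (ENNReal.ofReal_mul (by positivity)).symm
      _ = ENNReal.ofReal 2 := by congr 1; field_simp
  have hmb : ∀ s : ℝ, ε ≤ s → mfun ε s ≤ 32 * ε / s ^ 2 := by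
    intro s hs
    have hs0 : 0 < s := lt_of_lt_of_le hε0 hs
    unfold mfun
    rw [div_le_div_iff₀ (by positivity) (by positivity)]
    nlinarith [sq_nonneg ε, sq_nonneg s]
  have hp3 : ∫⁻ s in Set.Icc ε MB, ENNReal.ofReal (mfun ε s) ≤ ENNReal.ofReal 32 := by
    calc ∫⁻ s in Set.Icc ε MB, ENNReal.ofReal (mfun ε s)
        ≤ ∫⁻ s in Set.Icc ε MB, ENNReal.ofReal (32 * ε / s ^ 2) :=
          setLIntegral_mono (by fun_prop) (fun s hs => ENNReal.ofReal_le_ofReal (hmb s hs.1))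
      _ = ENNReal.ofReal (32 * ε * (ε⁻¹ - MB⁻¹)) := tail_sq hε0 hε0 hεM
      _ ≤ ENNReal.ofReal 32 := ENNReal.ofReal_le_ofReal (by
          have hMB0 : 0 < MB := by linarith
          have h1 : 32 * ε * (ε⁻¹ - MB⁻¹) = 32 - 32 * ε / MB := by field_simp
          rw [h1]
          have : 0 ≤ 32 * ε / MB := by positivity
          linarith)
  have hp2 : ∫⁻ s in Set.Icc (-MB) (-ε), ENNReal.ofReal (mfun ε s) ≤ ENNReal.ofReal 32 := by
    rw [lintegral_Icc_neg (by unfold mfun; fun_prop) ε MB]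
    have heven : ∀ s : ℝ, mfun ε (-s) = mfun ε s := by
      intro s; unfold mfun; rw [neg_pow]; norm_num
    simp_rw [heven]
    exact hp3
  calc (∫⁻ s in Set.Ioo (-ε) ε, ENNReal.ofReal (mfun ε s))
        + ((∫⁻ s in Set.Icc (-MB) (-ε), ENNReal.ofReal (mfun ε s))
          + ∫⁻ s in Set.Icc ε MB, ENNReal.ofReal (mfun ε s))
      ≤ ENNReal.ofReal 2 + (ENNReal.ofReal 32 + ENNReal.ofReal 32) :=
        add_le_add hp1 (add_le_add hp2 hp3)
    _ = ENNReal.ofReal 66 := by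
        rw [← ENNReal.ofReal_add (by norm_num) (by norm_num),
          ← ENNReal.ofReal_add (by norm_num) (by norm_num)]
        norm_num
    _ ≤ ENNReal.ofReal 100 := ENNReal.ofReal_le_ofReal (by norm_num)

lemma intFL {ε : ℝ} (hε0 : 0 < ε) (hε2 : ε ≤ 1 / 2) :
    ∫⁻ s, FL ε s ≤ ENNReal.ofReal (1000 * ε * |Real.log ε|) := by
  have hπ3 : (3 : ℝ) < Real.pi := Real.pi_gt_three
  have hπ4 : Real.pi < 3.15 := Real.pi_lt_d2
  have hM4 : (4 : ℝ) ≤ MB := by unfold MB; linarith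
  have hMB42 : MB ≤ 4.2 := by unfold MB; linarith
  have hεM : ε ≤ MB := by linarith
  have hMB0 : (0:ℝ) < MB := by linarith
  have hlogε : Real.log ε < 0 := Real.log_neg hε0 (by linarith)
  have habs : |Real.log ε| = -Real.log ε := abs_of_neg hlogε
  have hL2 : (0.69 : ℝ) ≤ |Real.log ε| := by
    have h2 : Real.log ε ≤ Real.log (1 / 2) := Real.log_le_log hε0 hε2
    have h3 : Real.log (1 / 2) = -Real.log 2 := by rw [one_div, Real.log_inv]
    have h4 := Real.log_two_gt_d9
    rw [habs]; linarith
  unfold FL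
  rw [lintegral_indicator measurableSet_Icc]
  refine le_trans (split_lintegral hε0 hεM _) ?_
  have hp1 : ∫⁻ s in Set.Ioo (-ε) ε, ENNReal.ofReal (lfun ε s) ≤ ENNReal.ofReal (2 * ε) := by
    calc ∫⁻ s in Set.Ioo (-ε) ε, ENNReal.ofReal (lfun ε s)
        ≤ ∫⁻ _ in Set.Ioo (-ε) ε, ENNReal.ofReal 1 :=
          setLIntegral_mono measurable_const (fun s hs => ENNReal.ofReal_le_ofReal (by
            unfold lfun
            rw [div_le_one (by positivity)]
            have h1 : |s| ≤ ε := by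
              rw [abs_le]; exact ⟨(hs.1).le, (hs.2).le⟩
            nlinarith [abs_nonneg s, sq_nonneg s]))
      _ = ENNReal.ofReal 1 * volume (Set.Ioo (-ε) ε) := setLIntegral_const _ _
      _ = ENNReal.ofReal 1 * ENNReal.ofReal (2 * ε) := by
          rw [Real.volume_Ioo]; congr 1; ring
      _ = ENNReal.ofReal (2 * ε) := by rw [ENNReal.ofReal_one, one_mul]
  have hlb : ∀ s : ℝ, ε ≤ s → lfun ε s ≤ 32 * ε / s := by
    intro s hs
    have hs0 : 0 < s := lt_of_lt_of_le hε0 hs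
    unfold lfun
    rw [abs_of_pos hs0, div_le_div_iff₀ (by positivity) hs0]
    nlinarith [sq_nonneg ε, sq_nonneg s, sq_nonneg (s - ε)]
  have hp3 : ∫⁻ s in Set.Icc ε MB, ENNReal.ofReal (lfun ε s)
      ≤ ENNReal.ofReal (32 * ε * Real.log (MB / ε)) := by
    calc ∫⁻ s in Set.Icc ε MB, ENNReal.ofReal (lfun ε s)
        ≤ ∫⁻ s in Set.Icc ε MB, ENNReal.ofReal (32 * ε / s) :=
          setLIntegral_mono (by fun_prop) (fun s hs => ENNReal.ofReal_le_ofReal (hlb s hs.1))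
      _ = ENNReal.ofReal (32 * ε * Real.log (MB / ε)) := tail_inv hε0 hε0 hεM
  have hp2 : ∫⁻ s in Set.Icc (-MB) (-ε), ENNReal.ofReal (lfun ε s)
      ≤ ENNReal.ofReal (32 * ε * Real.log (MB / ε)) := by
    rw [lintegral_Icc_neg (by unfold lfun; fun_prop) ε MB]
    have heven : ∀ s : ℝ, lfun ε (-s) = lfun ε s := by
      intro s; unfold lfun; rw [neg_pow, abs_neg]; norm_num
    simp_rw [heven]
    exact hp3
  have hlog : Real.log (MB / ε) ≤ 3.2 + |Real.log ε| := by
    rw [Real.log_div (ne_of_gt hMB0) (ne_of_gt hε0), habs]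
    have := Real.log_le_sub_one_of_pos hMB0
    linarith
  have hfinal : 2 * ε + (32 * ε * Real.log (MB / ε) + 32 * ε * Real.log (MB / ε))
      ≤ 1000 * ε * |Real.log ε| := by
    have h1 : 32 * ε * Real.log (MB / ε) ≤ 32 * ε * (3.2 + |Real.log ε|) :=
      mul_le_mul_of_nonneg_left hlog (by positivity)
    have h2 : (0:ℝ) ≤ ε * |Real.log ε| := mul_nonneg hε0.le (abs_nonneg _)
    nlinarith [mul_le_mul_of_nonneg_left hL2 (by positivity : (0:ℝ) ≤ 930 * ε)]
  calc (∫⁻ s in Set.Ioo (-ε) ε, ENNReal.ofReal (lfun ε s))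
        + ((∫⁻ s in Set.Icc (-MB) (-ε), ENNReal.ofReal (lfun ε s))
          + ∫⁻ s in Set.Icc ε MB, ENNReal.ofReal (lfun ε s))
      ≤ ENNReal.ofReal (2 * ε) + (ENNReal.ofReal (32 * ε * Real.log (MB / ε))
          + ENNReal.ofReal (32 * ε * Real.log (MB / ε))) :=
        add_le_add hp1 (add_le_add hp2 hp3)
    _ ≤ ENNReal.ofReal (1000 * ε * |Real.log ε|) := by
        have hlognn : 0 ≤ Real.log (MB / ε) := Real.log_nonneg (by
          rw [le_div_iff₀ hε0]; linarith)
        have h32nn : (0:ℝ) ≤ 32 * ε * Real.log (MB / ε) := by positivity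
        rw [← ENNReal.ofReal_add h32nn h32nn,
          ← ENNReal.ofReal_add (by positivity : (0:ℝ) ≤ 2 * ε) (by linarith)]
        exact ENNReal.ofReal_le_ofReal hfinal
  

noncomputable def uarg (t : ℝ × ℝ × ℝ) : ℝ := 2 * Real.pi * (t.1 - t.2.1) / 3
noncomputable def varg (t : ℝ × ℝ × ℝ) : ℝ := 2 * Real.pi * (t.2.1 - t.2.2) / 3
noncomputable def warg (t : ℝ × ℝ × ℝ) : ℝ := 2 * Real.pi * (t.2.2 - t.1) / 3

lemma uarg_mem {t : ℝ × ℝ × ℝ} (h1 : |t.1| ≤ 1) (h2 : |t.2.1| ≤ 1) :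
    uarg t ∈ Set.Icc (-MB) MB := by
  obtain ⟨ha, hb⟩ := abs_le.1 h1
  obtain ⟨hc, hd⟩ := abs_le.1 h2
  have hπ := Real.pi_pos
  unfold uarg MB
  constructor
  · nlinarith [mul_nonneg hπ.le (by linarith : (0:ℝ) ≤ 2 + (t.1 - t.2.1))]
  · nlinarith [mul_nonneg hπ.le (by linarith : (0:ℝ) ≤ 2 - (t.1 - t.2.1))]

lemma varg_mem {t : ℝ × ℝ × ℝ} (h2 : |t.2.1| ≤ 1) (h3 : |t.2.2| ≤ 1) :
    varg t ∈ Set.Icc (-MB) MB := by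
  obtain ⟨ha, hb⟩ := abs_le.1 h2
  obtain ⟨hc, hd⟩ := abs_le.1 h3
  have hπ := Real.pi_pos
  unfold varg MB
  constructor
  · nlinarith [mul_nonneg hπ.le (by linarith : (0:ℝ) ≤ 2 + (t.2.1 - t.2.2))]
  · nlinarith [mul_nonneg hπ.le (by linarith : (0:ℝ) ≤ 2 - (t.2.1 - t.2.2))]

lemma warg_mem {t : ℝ × ℝ × ℝ} (h3 : |t.2.2| ≤ 1) (h1 : |t.1| ≤ 1) :
    warg t ∈ Set.Icc (-MB) MB := by
  obtain ⟨ha, hb⟩ := abs_le.1 h3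
  obtain ⟨hc, hd⟩ := abs_le.1 h1
  have hπ := Real.pi_pos
  unfold warg MB
  constructor
  · nlinarith [mul_nonneg hπ.le (by linarith : (0:ℝ) ≤ 2 + (t.2.2 - t.1))]
  · nlinarith [mul_nonneg hπ.le (by linarith : (0:ℝ) ≤ 2 - (t.2.2 - t.1))]

lemma abs_le_MB {s : ℝ} (hs : s ∈ Set.Icc (-MB) MB) : |s| ≤ 4 * Real.pi / 3 := by
  have : |s| ≤ MB := abs_le.2 ⟨hs.1, hs.2⟩
  unfold MB at this
  linarith

lemma PKer_nonneg {r : ℝ} (h0 : 0 ≤ r) (h1 : r < 1) (t : ℝ × ℝ × ℝ) : 0 ≤ PKer r t := by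
  have q1 := (qr_pos h0 h1 (2 * Real.pi * (t.1 - t.2.1) / 3)).le
  have q2 := (qr_pos h0 h1 (2 * Real.pi * (t.2.1 - t.2.2) / 3)).le
  have q3 := (qr_pos h0 h1 (2 * Real.pi * (t.2.2 - t.1) / 3)).le
  have hcube : (0:ℝ) ≤ 1 - r ^ 3 := by
    have := pow_lt_one₀ h0 h1 (by norm_num : 3 ≠ 0)
    linarith
  have hn : (0:ℝ) ≤ (1 - r) ^ 3 * (1 - r ^ 3) :=
    mul_nonneg (pow_nonneg (by linarith) 3) hcube
  have hn2 : (0:ℝ) ≤ r * (1 - r) ^ 2 := mul_nonneg h0 (sq_nonneg _)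
  unfold PKer
  refine add_nonneg (add_nonneg (add_nonneg ?_ ?_) ?_) ?_ <;>
    exact div_nonneg (by assumption) (by positivity)

lemma arith_cube {r : ℝ} (hr0 : 0 ≤ r) (hr1 : r ≤ 1) : (1 - r) * (1 - r ^ 3) ≤ 3 * (1 - r) ^ 2 := by
  nlinarith [mul_nonneg (mul_nonneg (by linarith : (0:ℝ) ≤ 1 - r) (sq_nonneg (1 - r)))
    (by linarith : (0:ℝ) ≤ 2 + r)]

lemma arith_rsq {r : ℝ} (hr0 : 0 ≤ r) (hr1 : r ≤ 1) : r * (1 - r) ^ 2 ≤ (1 - r) ^ 2 := by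
  nlinarith [sq_nonneg (1 - r)]

lemma le_of_two_pi_mul_le {x s : ℝ} (hx : 0 ≤ x) (h : 2 * Real.pi * x ≤ s) : x ≤ s := by
  nlinarith [Real.pi_gt_three]

set_option maxHeartbeats 1000000 in
lemma ptwise {r : ℝ} (hr : 1 / 2 ≤ r) (hr1 : r < 1) {t : ℝ × ℝ × ℝ}
    (hsum : t.1 + t.2.1 + t.2.2 = 0)
    (h1 : |t.1| ≤ 1) (h2 : |t.2.1| ≤ 1) (h3 : |t.2.2| ≤ 1) :
    tnorm t * PKer r t ≤ 8 * (lfun (1 - r) (uarg t) * mfun (1 - r) (varg t)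
      + mfun (1 - r) (uarg t) * lfun (1 - r) (varg t)
      + lfun (1 - r) (varg t) * mfun (1 - r) (warg t)
      + mfun (1 - r) (varg t) * lfun (1 - r) (warg t)
      + lfun (1 - r) (warg t) * mfun (1 - r) (uarg t)
      + mfun (1 - r) (warg t) * lfun (1 - r) (uarg t)) := by
  have hr0 : (0:ℝ) ≤ r := by linarith
  have hε0 : (0:ℝ) < 1 - r := by linarith
  have hπ := Real.pi_pos
  have hπ3 := Real.pi_gt_three
  have hu4 : |uarg t| ≤ 4 * Real.pi / 3 := abs_le_MB (uarg_mem h1 h2)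
  have hv4 : |varg t| ≤ 4 * Real.pi / 3 := abs_le_MB (varg_mem h2 h3)
  have hw4 : |warg t| ≤ 4 * Real.pi / 3 := abs_le_MB (warg_mem h3 h1)
  set u := uarg t with hu
  set v := varg t with hv
  set w := warg t with hw
  set Q1 := qr r u with hQ1def
  set Q2 := qr r v with hQ2def
  set Q3 := qr r w with hQ3def
  have hQ1pos : 0 < Q1 := qr_pos hr0 hr1 u
  have hQ2pos : 0 < Q2 := qr_pos hr0 hr1 v
  have hQ3pos : 0 < Q3 := qr_pos hr0 hr1 w
  have hQ1low : (1 - r) ^ 2 + u ^ 2 / 32 ≤ Q1 := qr_lower hr hr1 hu4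
  have hQ2low : (1 - r) ^ 2 + v ^ 2 / 32 ≤ Q2 := qr_lower hr hr1 hv4
  have hQ3low : (1 - r) ^ 2 + w ^ 2 / 32 ≤ Q3 := qr_lower hr hr1 hw4
  have hQ1sq : (1 - r) ^ 2 ≤ Q1 := le_trans (by linarith [sq_nonneg u]) hQ1low
  have hQ2sq : (1 - r) ^ 2 ≤ Q2 := le_trans (by linarith [sq_nonneg v]) hQ2low
  have hQ3sq : (1 - r) ^ 2 ≤ Q3 := le_trans (by linarith [sq_nonneg w]) hQ3low
  -- bounds on ratios by lfun/mfun
  have hd1pos : (0:ℝ) < (1 - r) ^ 2 + u ^ 2 / 32 := by positivity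
  have hd2pos : (0:ℝ) < (1 - r) ^ 2 + v ^ 2 / 32 := by positivity
  have hd3pos : (0:ℝ) < (1 - r) ^ 2 + w ^ 2 / 32 := by positivity
  have hm_u : (1 - r) / Q1 ≤ mfun (1 - r) u := by
    unfold mfun; gcongr
  have hm_v : (1 - r) / Q2 ≤ mfun (1 - r) v := by
    unfold mfun; gcongr
  have hm_w : (1 - r) / Q3 ≤ mfun (1 - r) w := by
    unfold mfun; gcongr
  have hl_u : |u| * (1 - r) / Q1 ≤ lfun (1 - r) u := by
    unfold lfun; gcongr
  have hl_v : |v| * (1 - r) / Q2 ≤ lfun (1 - r) v := by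
    unfold lfun; gcongr
  have hl_w : |w| * (1 - r) / Q3 ≤ lfun (1 - r) w := by
    unfold lfun; gcongr
  -- step A : bound on PKer
  have hPK : PKer r t ≤ 4 * (1 - r) ^ 2 / (Q1 * Q2) + (1 - r) ^ 2 / (Q2 * Q3)
      + (1 - r) ^ 2 / (Q3 * Q1) := by
    have e1 : (1 - r) ^ 3 * (1 - r ^ 3) / (Q1 * Q2 * Q3) ≤ 3 * (1 - r) ^ 2 / (Q1 * Q2) := by
      rw [div_le_div_iff₀ (mul_pos (mul_pos hQ1pos hQ2pos) hQ3pos) (mul_pos hQ1pos hQ2pos)]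
      have hN : (1 - r) ^ 3 * (1 - r ^ 3) ≤ 3 * (1 - r) ^ 2 * Q3 := by
        have hx : (1 - r) * (1 - r ^ 3) ≤ 3 * (1 - r) ^ 2 := arith_cube hr0 hr1.le
        calc (1 - r) ^ 3 * (1 - r ^ 3) = (1 - r) ^ 2 * ((1 - r) * (1 - r ^ 3)) := by ring
          _ ≤ (1 - r) ^ 2 * (3 * (1 - r) ^ 2) := mul_le_mul_of_nonneg_left hx (sq_nonneg _)
          _ = 3 * ((1 - r) ^ 2 * (1 - r) ^ 2) := by ring
          _ ≤ 3 * ((1 - r) ^ 2 * Q3) := by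
              have := mul_le_mul_of_nonneg_left hQ3sq (sq_nonneg (1 - r))
              linarith
          _ = 3 * (1 - r) ^ 2 * Q3 := by ring
      calc (1 - r) ^ 3 * (1 - r ^ 3) * (Q1 * Q2)
          ≤ (3 * (1 - r) ^ 2 * Q3) * (Q1 * Q2) :=
            mul_le_mul_of_nonneg_right hN (mul_pos hQ1pos hQ2pos).le
        _ = 3 * (1 - r) ^ 2 * (Q1 * Q2 * Q3) := by ring
    have e2 : r * (1 - r) ^ 2 / (Q1 * Q2) ≤ (1 - r) ^ 2 / (Q1 * Q2) := by
      rw [div_le_div_iff₀ (mul_pos hQ1pos hQ2pos) (mul_pos hQ1pos hQ2pos)]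
      exact mul_le_mul_of_nonneg_right (arith_rsq hr0 hr1.le) (mul_pos hQ1pos hQ2pos).le
    have e3 : r * (1 - r) ^ 2 / (Q2 * Q3) ≤ (1 - r) ^ 2 / (Q2 * Q3) := by
      rw [div_le_div_iff₀ (mul_pos hQ2pos hQ3pos) (mul_pos hQ2pos hQ3pos)]
      exact mul_le_mul_of_nonneg_right (arith_rsq hr0 hr1.le) (mul_pos hQ2pos hQ3pos).le
    have e4 : r * (1 - r) ^ 2 / (Q3 * Q1) ≤ (1 - r) ^ 2 / (Q3 * Q1) := by
      rw [div_le_div_iff₀ (mul_pos hQ3pos hQ1pos) (mul_pos hQ3pos hQ1pos)]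
      exact mul_le_mul_of_nonneg_right (arith_rsq hr0 hr1.le) (mul_pos hQ3pos hQ1pos).le
    have hPKeq : PKer r t = (1 - r) ^ 3 * (1 - r ^ 3) / (Q1 * Q2 * Q3)
        + r * (1 - r) ^ 2 / (Q1 * Q2) + r * (1 - r) ^ 2 / (Q2 * Q3)
        + r * (1 - r) ^ 2 / (Q3 * Q1) := by
      rw [hQ1def, hQ2def, hQ3def, hu, hv, hw]
      unfold PKer uarg varg warg
      ring
    rw [hPKeq]
    have h4x : 3 * (1 - r) ^ 2 / (Q1 * Q2) + (1 - r) ^ 2 / (Q1 * Q2)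
        = 4 * (1 - r) ^ 2 / (Q1 * Q2) := by ring
    linarith
  -- step B : tnorm bound
  have huvw : u + v + w = 0 := by rw [hu, hv, hw]; unfold uarg varg warg; ring
  have habs_uw : |u - w| ≤ |u| + |w| := by
    calc |u - w| = |u + -w| := by ring_nf
      _ ≤ |u| + |-w| := abs_add_le u (-w)
      _ = |u| + |w| := by rw [abs_neg]
  have habs_vu : |v - u| ≤ |v| + |u| := by
    calc |v - u| = |v + -u| := by ring_nf
      _ ≤ |v| + |-u| := abs_add_le v (-u)
      _ = |v| + |u| := by rw [abs_neg]
  have habs_wv : |w - v| ≤ |w| + |v| := by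
    calc |w - v| = |w + -v| := by ring_nf
      _ ≤ |w| + |-v| := abs_add_le w (-v)
      _ = |w| + |v| := by rw [abs_neg]
  have ht1 : 2 * Real.pi * t.1 = u - w := by
    rw [hu, hw]; unfold uarg warg; linear_combination (2 * Real.pi / 3) * hsum
  have ht2 : 2 * Real.pi * t.2.1 = v - u := by
    rw [hv, hu]; unfold varg uarg; linear_combination (2 * Real.pi / 3) * hsum
  have ht3 : 2 * Real.pi * t.2.2 = w - v := by
    rw [hw, hv]; unfold warg varg; linear_combination (2 * Real.pi / 3) * hsum
  have hB : tnorm t ≤ |u| + |v| + |w| := by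
    have e1 : |t.1| ≤ |u| + |v| + |w| := by
      have h2π : |2 * Real.pi * t.1| = 2 * Real.pi * |t.1| := by
        rw [abs_mul, abs_of_pos (by linarith : (0:ℝ) < 2 * Real.pi)]
      have hh : 2 * Real.pi * |t.1| ≤ |u| + |w| := by
        rw [← h2π, ht1]; exact habs_uw
      have := le_of_two_pi_mul_le (abs_nonneg t.1) hh
      linarith [abs_nonneg v]
    have e2 : |t.2.1| ≤ |u| + |v| + |w| := by
      have h2π : |2 * Real.pi * t.2.1| = 2 * Real.pi * |t.2.1| := by
        rw [abs_mul, abs_of_pos (by linarith : (0:ℝ) < 2 * Real.pi)]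
      have hh : 2 * Real.pi * |t.2.1| ≤ |v| + |u| := by
        rw [← h2π, ht2]; exact habs_vu
      have := le_of_two_pi_mul_le (abs_nonneg t.2.1) hh
      linarith [abs_nonneg w]
    have e3 : |t.2.2| ≤ |u| + |v| + |w| := by
      have h2π : |2 * Real.pi * t.2.2| = 2 * Real.pi * |t.2.2| := by
        rw [abs_mul, abs_of_pos (by linarith : (0:ℝ) < 2 * Real.pi)]
      have hh : 2 * Real.pi * |t.2.2| ≤ |w| + |v| := by
        rw [← h2π, ht3]; exact habs_wv
      have := le_of_two_pi_mul_le (abs_nonneg t.2.2) hh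
      linarith [abs_nonneg u]
    exact max_le e1 (max_le e2 e3)
  -- step C : multiply
  have hC : tnorm t * PKer r t ≤ (|u| + |v| + |w|) *
      (4 * (1 - r) ^ 2 / (Q1 * Q2) + (1 - r) ^ 2 / (Q2 * Q3) + (1 - r) ^ 2 / (Q3 * Q1)) :=
    mul_le_mul hB hPK (PKer_nonneg hr0 hr1 t) (by positivity)
  -- step D : pair bounds
  have hSnn : (0:ℝ) ≤ |u| + |v| + |w| := by positivity
  have hQ1ne : Q1 ≠ 0 := ne_of_gt hQ1pos
  have hQ2ne : Q2 ≠ 0 := ne_of_gt hQ2pos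
  have hQ3ne : Q3 ≠ 0 := ne_of_gt hQ3pos
  have hmnn_u : 0 ≤ mfun (1 - r) u := mfun_nonneg hε0.le u
  have hmnn_v : 0 ≤ mfun (1 - r) v := mfun_nonneg hε0.le v
  have hmnn_w : 0 ≤ mfun (1 - r) w := mfun_nonneg hε0.le w
  have hlnn_u : 0 ≤ lfun (1 - r) u := lfun_nonneg hε0.le u
  have hlnn_v : 0 ≤ lfun (1 - r) v := lfun_nonneg hε0.le v
  have hlnn_w : 0 ≤ lfun (1 - r) w := lfun_nonneg hε0.le w
  have hD1 : (|u| + |v| + |w|) * (4 * (1 - r) ^ 2 / (Q1 * Q2))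
      ≤ 8 * (lfun (1 - r) u * mfun (1 - r) v + mfun (1 - r) u * lfun (1 - r) v) := by
    have hwle : |w| ≤ |u| + |v| := by
      have : w = -(u + v) := by linarith
      rw [this, abs_neg]; exact abs_add_le u v
    have hp1 : |u| * (1 - r) / Q1 * ((1 - r) / Q2) ≤ lfun (1 - r) u * mfun (1 - r) v :=
      mul_le_mul hl_u hm_v (div_nonneg hε0.le hQ2pos.le) hlnn_u
    have hp2 : (1 - r) / Q1 * (|v| * (1 - r) / Q2) ≤ mfun (1 - r) u * lfun (1 - r) v :=
      mul_le_mul hm_u hl_v (div_nonneg (mul_nonneg (abs_nonneg v) hε0.le) hQ2pos.le) hmnn_u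
    have heq : (2 * (|u| + |v|)) * (4 * (1 - r) ^ 2 / (Q1 * Q2))
        = 8 * (|u| * (1 - r) / Q1 * ((1 - r) / Q2) + (1 - r) / Q1 * (|v| * (1 - r) / Q2)) := by
      field_simp
      ring
    have hstep : (|u| + |v| + |w|) * (4 * (1 - r) ^ 2 / (Q1 * Q2))
        ≤ (2 * (|u| + |v|)) * (4 * (1 - r) ^ 2 / (Q1 * Q2)) :=
      mul_le_mul_of_nonneg_right (by linarith)
        (div_nonneg (by positivity) (mul_pos hQ1pos hQ2pos).le)
    rw [heq] at hstep
    linarith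
  have hD2 : (|u| + |v| + |w|) * ((1 - r) ^ 2 / (Q2 * Q3))
      ≤ 8 * (lfun (1 - r) v * mfun (1 - r) w + mfun (1 - r) v * lfun (1 - r) w) := by
    have hule : |u| ≤ |v| + |w| := by
      have : u = -(v + w) := by linarith
      rw [this, abs_neg]; exact abs_add_le v w
    have hp1 : |v| * (1 - r) / Q2 * ((1 - r) / Q3) ≤ lfun (1 - r) v * mfun (1 - r) w :=
      mul_le_mul hl_v hm_w (div_nonneg hε0.le hQ3pos.le) hlnn_v
    have hp2 : (1 - r) / Q2 * (|w| * (1 - r) / Q3) ≤ mfun (1 - r) v * lfun (1 - r) w :=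
      mul_le_mul hm_v hl_w (div_nonneg (mul_nonneg (abs_nonneg w) hε0.le) hQ3pos.le) hmnn_v
    have heq : (2 * (|v| + |w|)) * (4 * (1 - r) ^ 2 / (Q2 * Q3))
        = 8 * (|v| * (1 - r) / Q2 * ((1 - r) / Q3) + (1 - r) / Q2 * (|w| * (1 - r) / Q3)) := by
      field_simp
      ring
    have hstep : (|u| + |v| + |w|) * (4 * (1 - r) ^ 2 / (Q2 * Q3))
        ≤ (2 * (|v| + |w|)) * (4 * (1 - r) ^ 2 / (Q2 * Q3)) :=
      mul_le_mul_of_nonneg_right (by linarith)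
        (div_nonneg (by positivity) (mul_pos hQ2pos hQ3pos).le)
    rw [heq] at hstep
    have hquarter : (|u| + |v| + |w|) * ((1 - r) ^ 2 / (Q2 * Q3))
        ≤ (|u| + |v| + |w|) * (4 * (1 - r) ^ 2 / (Q2 * Q3)) := by
      apply mul_le_mul_of_nonneg_left _ hSnn
      rw [div_le_div_iff₀ (mul_pos hQ2pos hQ3pos) (mul_pos hQ2pos hQ3pos)]
      have hX : (0:ℝ) ≤ (1 - r) ^ 2 * (Q2 * Q3) :=
        mul_nonneg (sq_nonneg _) (mul_pos hQ2pos hQ3pos).le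
      linarith
    linarith
  have hD3 : (|u| + |v| + |w|) * ((1 - r) ^ 2 / (Q3 * Q1))
      ≤ 8 * (lfun (1 - r) w * mfun (1 - r) u + mfun (1 - r) w * lfun (1 - r) u) := by
    have hvle : |v| ≤ |w| + |u| := by
      have : v = -(w + u) := by linarith
      rw [this, abs_neg]; exact abs_add_le w u
    have hp1 : |w| * (1 - r) / Q3 * ((1 - r) / Q1) ≤ lfun (1 - r) w * mfun (1 - r) u :=
      mul_le_mul hl_w hm_u (div_nonneg hε0.le hQ1pos.le) hlnn_w
    have hp2 : (1 - r) / Q3 * (|u| * (1 - r) / Q1) ≤ mfun (1 - r) w * lfun (1 - r) u :=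
      mul_le_mul hm_w hl_u (div_nonneg (mul_nonneg (abs_nonneg u) hε0.le) hQ1pos.le) hmnn_w
    have heq : (2 * (|w| + |u|)) * (4 * (1 - r) ^ 2 / (Q3 * Q1))
        = 8 * (|w| * (1 - r) / Q3 * ((1 - r) / Q1) + (1 - r) / Q3 * (|u| * (1 - r) / Q1)) := by
      field_simp
      ring
    have hstep : (|u| + |v| + |w|) * (4 * (1 - r) ^ 2 / (Q3 * Q1))
        ≤ (2 * (|w| + |u|)) * (4 * (1 - r) ^ 2 / (Q3 * Q1)) :=
      mul_le_mul_of_nonneg_right (by linarith)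
        (div_nonneg (by positivity) (mul_pos hQ3pos hQ1pos).le)
    rw [heq] at hstep
    have hquarter : (|u| + |v| + |w|) * ((1 - r) ^ 2 / (Q3 * Q1))
        ≤ (|u| + |v| + |w|) * (4 * (1 - r) ^ 2 / (Q3 * Q1)) := by
      apply mul_le_mul_of_nonneg_left _ hSnn
      rw [div_le_div_iff₀ (mul_pos hQ3pos hQ1pos) (mul_pos hQ3pos hQ1pos)]
      have hX : (0:ℝ) ≤ (1 - r) ^ 2 * (Q3 * Q1) :=
        mul_nonneg (sq_nonneg _) (mul_pos hQ3pos hQ1pos).le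
      linarith
    linarith
  have hmul : (|u| + |v| + |w|) *
      (4 * (1 - r) ^ 2 / (Q1 * Q2) + (1 - r) ^ 2 / (Q2 * Q3) + (1 - r) ^ 2 / (Q3 * Q1))
      = (|u| + |v| + |w|) * (4 * (1 - r) ^ 2 / (Q1 * Q2))
        + (|u| + |v| + |w|) * ((1 - r) ^ 2 / (Q2 * Q3))
        + (|u| + |v| + |w|) * ((1 - r) ^ 2 / (Q3 * Q1)) := by ring
  rw [hmul] at hC
  linarith

lemma ofReal_add6_le (a b c d e f : ℝ) :
    ENNReal.ofReal (a + b + c + d + e + f) ≤ ENNReal.ofReal a + ENNReal.ofReal b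
      + ENNReal.ofReal c + ENNReal.ofReal d + ENNReal.ofReal e + ENNReal.ofReal f := by
  refine le_trans ENNReal.ofReal_add_le (add_le_add ?_ le_rfl)
  refine le_trans ENNReal.ofReal_add_le (add_le_add ?_ le_rfl)
  refine le_trans ENNReal.ofReal_add_le (add_le_add ?_ le_rfl)
  refine le_trans ENNReal.ofReal_add_le (add_le_add ?_ le_rfl)
  exact ENNReal.ofReal_add_le

end Stmt18Aux

set_option maxHeartbeats 2000000 in
theorem stmt_18 :
    ∃ C : ℝ, 0 < C ∧
      ∀ r : ℝ, 1 / 2 ≤ r → r < 1 →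
        hexInt (fun t => tnorm t * PKer r t) ≤ C * (1 - r) * |Real.log (1 - r)| := by
  classical
  refine ⟨10000000, by norm_num, ?_⟩
  intro r hr hr1
  open Stmt18Aux in
  have hε0 : (0:ℝ) < 1 - r := by linarith
  have hε2 : 1 - r ≤ 1 / 2 := by linarith
  have hr0 : (0:ℝ) ≤ r := by linarith
  have hπ3 := Real.pi_gt_three
  have hπpos := Real.pi_pos
  have hsqrt3 : 1 ≤ Real.sqrt 3 := by
    rw [show (1:ℝ) = Real.sqrt 1 from Real.sqrt_one.symm]
    exact Real.sqrt_le_sqrt (by norm_num)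
  set k : ℝ := Real.pi * Real.sqrt 3 / 3 with hkdef
  have hkpos : 0 < k := by rw [hkdef]; positivity
  have hk2 : 1 ≤ |2 * k| := by
    rw [abs_of_pos (by positivity), hkdef]
    nlinarith
  have hbπ : 1 ≤ |Real.pi| := by rw [abs_of_pos hπpos]; linarith
  have hbπn : 1 ≤ |(-Real.pi)| := by rw [abs_neg]; exact hbπ
  have hc2k : 1 ≤ |(-(2 * k))| := by rw [abs_neg]; exact hk2
  have hgm : Measurable fun x : ℝ × ℝ => tnorm (phiH x) * PKer r (phiH x) := by
    unfold tnorm PKer qr phiH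
    fun_prop
  have hg0 : ∀ x : ℝ × ℝ, 0 ≤ tnorm (phiH x) * PKer r (phiH x) := fun x =>
    mul_nonneg (le_trans (abs_nonneg _) (le_max_left _ _)) (Stmt18Aux.PKer_nonneg hr0 hr1 _)
  have hFLm := Stmt18Aux.FL_meas (1 - r)
  have hFMm := Stmt18Aux.FM_meas (1 - r)
  have l_nn := fun s : ℝ => Stmt18Aux.lfun_nonneg (le_of_lt hε0) s
  have m_nn := fun s : ℝ => Stmt18Aux.mfun_nonneg (le_of_lt hε0) s
  -- pointwise bound on the domain
  have hle : ∀ x ∈ phiH ⁻¹' OmegaH,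
      ENNReal.ofReal (tnorm (phiH x) * PKer r (phiH x))
      ≤ 8 * (Stmt18Aux.FL (1-r) (k*x.1 - Real.pi*x.2) * Stmt18Aux.FM (1-r) (k*x.1 + Real.pi*x.2)
        + Stmt18Aux.FM (1-r) (k*x.1 - Real.pi*x.2) * Stmt18Aux.FL (1-r) (k*x.1 + Real.pi*x.2)
        + Stmt18Aux.FL (1-r) (k*x.1 + Real.pi*x.2) * Stmt18Aux.FM (1-r) (-(2*k)*x.1)
        + Stmt18Aux.FM (1-r) (k*x.1 + Real.pi*x.2) * Stmt18Aux.FL (1-r) (-(2*k)*x.1)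
        + Stmt18Aux.FL (1-r) (-(2*k)*x.1) * Stmt18Aux.FM (1-r) (k*x.1 - Real.pi*x.2)
        + Stmt18Aux.FM (1-r) (-(2*k)*x.1) * Stmt18Aux.FL (1-r) (k*x.1 - Real.pi*x.2)) := by
    intro x hx
    have hx' : phiH x ∈ OmegaH := hx
    simp only [OmegaH, Set.mem_setOf_eq] at hx'
    obtain ⟨hs0, ha1, ha2, ha3, ha4, ha5, ha6⟩ := hx'
    have h1 : |(phiH x).1| ≤ 1 := abs_le.2 ⟨ha1, ha2.le⟩
    have h2 : |(phiH x).2.1| ≤ 1 := abs_le.2 ⟨ha3, ha4.le⟩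
    have h3 : |(phiH x).2.2| ≤ 1 := abs_le.2 ⟨ha5.le, ha6⟩
    have hb := Stmt18Aux.ptwise hr hr1 hs0 h1 h2 h3
    have hc1 : (phiH x).1 = (Real.sqrt 3 * x.1 - x.2) / 2 := rfl
    have hc2 : (phiH x).2.1 = x.2 := rfl
    have hc3 : (phiH x).2.2 = -(Real.sqrt 3 * x.1 + x.2) / 2 := rfl
    have hUx : Stmt18Aux.uarg (phiH x) = k * x.1 - Real.pi * x.2 := by
      unfold Stmt18Aux.uarg
      rw [hc1, hc2, hkdef]; ring
    have hVx : Stmt18Aux.varg (phiH x) = k * x.1 + Real.pi * x.2 := by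
      unfold Stmt18Aux.varg
      rw [hc2, hc3, hkdef]; ring
    have hWx : Stmt18Aux.warg (phiH x) = -(2 * k) * x.1 := by
      unfold Stmt18Aux.warg
      rw [hc3, hc1, hkdef]; ring
    have hmu := Stmt18Aux.uarg_mem h1 h2
    have hmv := Stmt18Aux.varg_mem h2 h3
    have hmw := Stmt18Aux.warg_mem h3 h1
    have eFLu : Stmt18Aux.FL (1-r) (k*x.1 - Real.pi*x.2)
        = ENNReal.ofReal (Stmt18Aux.lfun (1-r) (Stmt18Aux.uarg (phiH x))) := by
      rw [← hUx]; unfold Stmt18Aux.FL; rw [Set.indicator_of_mem hmu]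
    have eFMu : Stmt18Aux.FM (1-r) (k*x.1 - Real.pi*x.2)
        = ENNReal.ofReal (Stmt18Aux.mfun (1-r) (Stmt18Aux.uarg (phiH x))) := by
      rw [← hUx]; unfold Stmt18Aux.FM; rw [Set.indicator_of_mem hmu]
    have eFLv : Stmt18Aux.FL (1-r) (k*x.1 + Real.pi*x.2)
        = ENNReal.ofReal (Stmt18Aux.lfun (1-r) (Stmt18Aux.varg (phiH x))) := by
      rw [← hVx]; unfold Stmt18Aux.FL; rw [Set.indicator_of_mem hmv]
    have eFMv : Stmt18Aux.FM (1-r) (k*x.1 + Real.pi*x.2)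
        = ENNReal.ofReal (Stmt18Aux.mfun (1-r) (Stmt18Aux.varg (phiH x))) := by
      rw [← hVx]; unfold Stmt18Aux.FM; rw [Set.indicator_of_mem hmv]
    have eFLw : Stmt18Aux.FL (1-r) (-(2*k)*x.1)
        = ENNReal.ofReal (Stmt18Aux.lfun (1-r) (Stmt18Aux.warg (phiH x))) := by
      rw [← hWx]; unfold Stmt18Aux.FL; rw [Set.indicator_of_mem hmw]
    have eFMw : Stmt18Aux.FM (1-r) (-(2*k)*x.1)
        = ENNReal.ofReal (Stmt18Aux.mfun (1-r) (Stmt18Aux.warg (phiH x))) := by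
      rw [← hWx]; unfold Stmt18Aux.FM; rw [Set.indicator_of_mem hmw]
    rw [eFLu, eFMu, eFLv, eFMv, eFLw, eFMw]
    calc ENNReal.ofReal (tnorm (phiH x) * PKer r (phiH x))
        ≤ ENNReal.ofReal (8 * (Stmt18Aux.lfun (1-r) (Stmt18Aux.uarg (phiH x)) * Stmt18Aux.mfun (1-r) (Stmt18Aux.varg (phiH x))
            + Stmt18Aux.mfun (1-r) (Stmt18Aux.uarg (phiH x)) * Stmt18Aux.lfun (1-r) (Stmt18Aux.varg (phiH x))
            + Stmt18Aux.lfun (1-r) (Stmt18Aux.varg (phiH x)) * Stmt18Aux.mfun (1-r) (Stmt18Aux.warg (phiH x))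
            + Stmt18Aux.mfun (1-r) (Stmt18Aux.varg (phiH x)) * Stmt18Aux.lfun (1-r) (Stmt18Aux.warg (phiH x))
            + Stmt18Aux.lfun (1-r) (Stmt18Aux.warg (phiH x)) * Stmt18Aux.mfun (1-r) (Stmt18Aux.uarg (phiH x))
            + Stmt18Aux.mfun (1-r) (Stmt18Aux.warg (phiH x)) * Stmt18Aux.lfun (1-r) (Stmt18Aux.uarg (phiH x)))) :=
          ENNReal.ofReal_le_ofReal hb
      _ = ENNReal.ofReal 8 * ENNReal.ofReal (Stmt18Aux.lfun (1-r) (Stmt18Aux.uarg (phiH x)) * Stmt18Aux.mfun (1-r) (Stmt18Aux.varg (phiH x))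
            + Stmt18Aux.mfun (1-r) (Stmt18Aux.uarg (phiH x)) * Stmt18Aux.lfun (1-r) (Stmt18Aux.varg (phiH x))
            + Stmt18Aux.lfun (1-r) (Stmt18Aux.varg (phiH x)) * Stmt18Aux.mfun (1-r) (Stmt18Aux.warg (phiH x))
            + Stmt18Aux.mfun (1-r) (Stmt18Aux.varg (phiH x)) * Stmt18Aux.lfun (1-r) (Stmt18Aux.warg (phiH x))
            + Stmt18Aux.lfun (1-r) (Stmt18Aux.warg (phiH x)) * Stmt18Aux.mfun (1-r) (Stmt18Aux.uarg (phiH x))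
            + Stmt18Aux.mfun (1-r) (Stmt18Aux.warg (phiH x)) * Stmt18Aux.lfun (1-r) (Stmt18Aux.uarg (phiH x))) :=
          ENNReal.ofReal_mul (by norm_num)
      _ ≤ _ := by
          rw [show ENNReal.ofReal 8 = (8:ℝ≥0∞) by simp]
          apply mul_le_mul_right
          refine le_trans (Stmt18Aux.ofReal_add6_le _ _ _ _ _ _) ?_
          rw [ENNReal.ofReal_mul (l_nn _), ENNReal.ofReal_mul (m_nn _),
            ENNReal.ofReal_mul (l_nn _), ENNReal.ofReal_mul (m_nn _),
            ENNReal.ofReal_mul (l_nn _), ENNReal.ofReal_mul (m_nn _)]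
  -- measurability of the six product terms
  have hlin1 : Measurable fun x : ℝ × ℝ => k*x.1 - Real.pi*x.2 := by fun_prop
  have hlin2 : Measurable fun x : ℝ × ℝ => k*x.1 + Real.pi*x.2 := by fun_prop
  have hlin3 : Measurable fun x : ℝ × ℝ => -(2*k)*x.1 := by fun_prop
  have hm1 : Measurable fun x : ℝ × ℝ =>
      Stmt18Aux.FL (1-r) (k*x.1 - Real.pi*x.2) * Stmt18Aux.FM (1-r) (k*x.1 + Real.pi*x.2) :=
    (hFLm.comp hlin1).mul (hFMm.comp hlin2)
  have hm2 : Measurable fun x : ℝ × ℝ =>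
      Stmt18Aux.FM (1-r) (k*x.1 - Real.pi*x.2) * Stmt18Aux.FL (1-r) (k*x.1 + Real.pi*x.2) :=
    (hFMm.comp hlin1).mul (hFLm.comp hlin2)
  have hm3 : Measurable fun x : ℝ × ℝ =>
      Stmt18Aux.FL (1-r) (k*x.1 + Real.pi*x.2) * Stmt18Aux.FM (1-r) (-(2*k)*x.1) :=
    (hFLm.comp hlin2).mul (hFMm.comp hlin3)
  have hm4 : Measurable fun x : ℝ × ℝ =>
      Stmt18Aux.FM (1-r) (k*x.1 + Real.pi*x.2) * Stmt18Aux.FL (1-r) (-(2*k)*x.1) :=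
    (hFMm.comp hlin2).mul (hFLm.comp hlin3)
  have hm5 : Measurable fun x : ℝ × ℝ =>
      Stmt18Aux.FL (1-r) (-(2*k)*x.1) * Stmt18Aux.FM (1-r) (k*x.1 - Real.pi*x.2) :=
    (hFLm.comp hlin3).mul (hFMm.comp hlin1)
  have hm6 : Measurable fun x : ℝ × ℝ =>
      Stmt18Aux.FM (1-r) (-(2*k)*x.1) * Stmt18Aux.FL (1-r) (k*x.1 - Real.pi*x.2) :=
    (hFMm.comp hlin3).mul (hFLm.comp hlin1)
  have hsum_meas : Measurable fun x : ℝ × ℝ =>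
      Stmt18Aux.FL (1-r) (k*x.1 - Real.pi*x.2) * Stmt18Aux.FM (1-r) (k*x.1 + Real.pi*x.2)
        + Stmt18Aux.FM (1-r) (k*x.1 - Real.pi*x.2) * Stmt18Aux.FL (1-r) (k*x.1 + Real.pi*x.2)
        + Stmt18Aux.FL (1-r) (k*x.1 + Real.pi*x.2) * Stmt18Aux.FM (1-r) (-(2*k)*x.1)
        + Stmt18Aux.FM (1-r) (k*x.1 + Real.pi*x.2) * Stmt18Aux.FL (1-r) (-(2*k)*x.1)
        + Stmt18Aux.FL (1-r) (-(2*k)*x.1) * Stmt18Aux.FM (1-r) (k*x.1 - Real.pi*x.2)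
        + Stmt18Aux.FM (1-r) (-(2*k)*x.1) * Stmt18Aux.FL (1-r) (k*x.1 - Real.pi*x.2) :=
    ((((hm1.add hm2).add hm3).add hm4).add hm5).add hm6
  set A := ∫⁻ s, Stmt18Aux.FL (1-r) s with hAdef
  set B := ∫⁻ s, Stmt18Aux.FM (1-r) s with hBdef
  have hI1 : (∫⁻ x : ℝ × ℝ, Stmt18Aux.FL (1-r) (k*x.1 - Real.pi*x.2)
      * Stmt18Aux.FM (1-r) (k*x.1 + Real.pi*x.2)) ≤ A * B :=
    Stmt18Aux.prodP1 hFLm hFMm hk2 hbπ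
  have hI2 : (∫⁻ x : ℝ × ℝ, Stmt18Aux.FM (1-r) (k*x.1 - Real.pi*x.2)
      * Stmt18Aux.FL (1-r) (k*x.1 + Real.pi*x.2)) ≤ A * B := by
    rw [mul_comm A B]
    exact Stmt18Aux.prodP1 hFMm hFLm hk2 hbπ
  have hI3 : (∫⁻ x : ℝ × ℝ, Stmt18Aux.FL (1-r) (k*x.1 + Real.pi*x.2)
      * Stmt18Aux.FM (1-r) (-(2*k)*x.1)) ≤ A * B :=
    Stmt18Aux.prodP2 hFLm hFMm k hbπ hc2k
  have hI4 : (∫⁻ x : ℝ × ℝ, Stmt18Aux.FM (1-r) (k*x.1 + Real.pi*x.2)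
      * Stmt18Aux.FL (1-r) (-(2*k)*x.1)) ≤ A * B := by
    rw [mul_comm A B]
    exact Stmt18Aux.prodP2 hFMm hFLm k hbπ hc2k
  have hI5 : (∫⁻ x : ℝ × ℝ, Stmt18Aux.FL (1-r) (-(2*k)*x.1)
      * Stmt18Aux.FM (1-r) (k*x.1 - Real.pi*x.2)) ≤ A * B := by
    have hrw : (fun x : ℝ × ℝ => Stmt18Aux.FL (1-r) (-(2*k)*x.1)
        * Stmt18Aux.FM (1-r) (k*x.1 - Real.pi*x.2))
        = fun x : ℝ × ℝ => Stmt18Aux.FM (1-r) (k*x.1 + (-Real.pi)*x.2)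
          * Stmt18Aux.FL (1-r) (-(2*k)*x.1) := by
      funext x
      rw [mul_comm, show k*x.1 - Real.pi*x.2 = k*x.1 + (-Real.pi)*x.2 from by ring]
    rw [hrw, mul_comm A B]
    exact Stmt18Aux.prodP2 hFMm hFLm k hbπn hc2k
  have hI6 : (∫⁻ x : ℝ × ℝ, Stmt18Aux.FM (1-r) (-(2*k)*x.1)
      * Stmt18Aux.FL (1-r) (k*x.1 - Real.pi*x.2)) ≤ A * B := by
    have hrw : (fun x : ℝ × ℝ => Stmt18Aux.FM (1-r) (-(2*k)*x.1)
        * Stmt18Aux.FL (1-r) (k*x.1 - Real.pi*x.2))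
        = fun x : ℝ × ℝ => Stmt18Aux.FL (1-r) (k*x.1 + (-Real.pi)*x.2)
          * Stmt18Aux.FM (1-r) (-(2*k)*x.1) := by
      funext x
      rw [mul_comm, show k*x.1 - Real.pi*x.2 = k*x.1 + (-Real.pi)*x.2 from by ring]
    rw [hrw]
    exact Stmt18Aux.prodP2 hFLm hFMm k hbπn hc2k
  have hA : A ≤ ENNReal.ofReal (1000 * (1-r) * |Real.log (1-r)|) := Stmt18Aux.intFL hε0 hε2
  have hB : B ≤ ENNReal.ofReal 100 := Stmt18Aux.intFM hε0 hε2
  have hKey : (∫⁻ x in phiH ⁻¹' OmegaH, ENNReal.ofReal (tnorm (phiH x) * PKer r (phiH x)))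
      ≤ ENNReal.ofReal (10000000 * (1 - r) * |Real.log (1 - r)|) := by
    calc (∫⁻ x in phiH ⁻¹' OmegaH, ENNReal.ofReal (tnorm (phiH x) * PKer r (phiH x)))
        ≤ ∫⁻ x in phiH ⁻¹' OmegaH,
            8 * (Stmt18Aux.FL (1-r) (k*x.1 - Real.pi*x.2) * Stmt18Aux.FM (1-r) (k*x.1 + Real.pi*x.2)
            + Stmt18Aux.FM (1-r) (k*x.1 - Real.pi*x.2) * Stmt18Aux.FL (1-r) (k*x.1 + Real.pi*x.2)
            + Stmt18Aux.FL (1-r) (k*x.1 + Real.pi*x.2) * Stmt18Aux.FM (1-r) (-(2*k)*x.1)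
            + Stmt18Aux.FM (1-r) (k*x.1 + Real.pi*x.2) * Stmt18Aux.FL (1-r) (-(2*k)*x.1)
            + Stmt18Aux.FL (1-r) (-(2*k)*x.1) * Stmt18Aux.FM (1-r) (k*x.1 - Real.pi*x.2)
            + Stmt18Aux.FM (1-r) (-(2*k)*x.1) * Stmt18Aux.FL (1-r) (k*x.1 - Real.pi*x.2)) :=
          setLIntegral_mono (hsum_meas.const_mul 8) hle
      _ ≤ ∫⁻ x : ℝ × ℝ,
            8 * (Stmt18Aux.FL (1-r) (k*x.1 - Real.pi*x.2) * Stmt18Aux.FM (1-r) (k*x.1 + Real.pi*x.2)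
            + Stmt18Aux.FM (1-r) (k*x.1 - Real.pi*x.2) * Stmt18Aux.FL (1-r) (k*x.1 + Real.pi*x.2)
            + Stmt18Aux.FL (1-r) (k*x.1 + Real.pi*x.2) * Stmt18Aux.FM (1-r) (-(2*k)*x.1)
            + Stmt18Aux.FM (1-r) (k*x.1 + Real.pi*x.2) * Stmt18Aux.FL (1-r) (-(2*k)*x.1)
            + Stmt18Aux.FL (1-r) (-(2*k)*x.1) * Stmt18Aux.FM (1-r) (k*x.1 - Real.pi*x.2)
            + Stmt18Aux.FM (1-r) (-(2*k)*x.1) * Stmt18Aux.FL (1-r) (k*x.1 - Real.pi*x.2)) :=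
          setLIntegral_le_lintegral _ _
      _ = 8 * ∫⁻ x : ℝ × ℝ,
            (Stmt18Aux.FL (1-r) (k*x.1 - Real.pi*x.2) * Stmt18Aux.FM (1-r) (k*x.1 + Real.pi*x.2)
            + Stmt18Aux.FM (1-r) (k*x.1 - Real.pi*x.2) * Stmt18Aux.FL (1-r) (k*x.1 + Real.pi*x.2)
            + Stmt18Aux.FL (1-r) (k*x.1 + Real.pi*x.2) * Stmt18Aux.FM (1-r) (-(2*k)*x.1)
            + Stmt18Aux.FM (1-r) (k*x.1 + Real.pi*x.2) * Stmt18Aux.FL (1-r) (-(2*k)*x.1)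
            + Stmt18Aux.FL (1-r) (-(2*k)*x.1) * Stmt18Aux.FM (1-r) (k*x.1 - Real.pi*x.2)
            + Stmt18Aux.FM (1-r) (-(2*k)*x.1) * Stmt18Aux.FL (1-r) (k*x.1 - Real.pi*x.2)) :=
          lintegral_const_mul 8 hsum_meas
      _ = 8 * ((∫⁻ x : ℝ × ℝ, Stmt18Aux.FL (1-r) (k*x.1 - Real.pi*x.2) * Stmt18Aux.FM (1-r) (k*x.1 + Real.pi*x.2))
            + (∫⁻ x : ℝ × ℝ, Stmt18Aux.FM (1-r) (k*x.1 - Real.pi*x.2) * Stmt18Aux.FL (1-r) (k*x.1 + Real.pi*x.2))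
            + (∫⁻ x : ℝ × ℝ, Stmt18Aux.FL (1-r) (k*x.1 + Real.pi*x.2) * Stmt18Aux.FM (1-r) (-(2*k)*x.1))
            + (∫⁻ x : ℝ × ℝ, Stmt18Aux.FM (1-r) (k*x.1 + Real.pi*x.2) * Stmt18Aux.FL (1-r) (-(2*k)*x.1))
            + (∫⁻ x : ℝ × ℝ, Stmt18Aux.FL (1-r) (-(2*k)*x.1) * Stmt18Aux.FM (1-r) (k*x.1 - Real.pi*x.2))
            + ∫⁻ x : ℝ × ℝ, Stmt18Aux.FM (1-r) (-(2*k)*x.1) * Stmt18Aux.FL (1-r) (k*x.1 - Real.pi*x.2)) := by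
          rw [lintegral_add_left ((((hm1.fun_add hm2).fun_add hm3).fun_add hm4).fun_add hm5),
            lintegral_add_left (((hm1.fun_add hm2).fun_add hm3).fun_add hm4),
            lintegral_add_left ((hm1.fun_add hm2).fun_add hm3),
            lintegral_add_left (hm1.fun_add hm2),
            lintegral_add_left hm1]
      _ ≤ 8 * (A * B + A * B + A * B + A * B + A * B + A * B) := by
          apply mul_le_mul_right
          exact add_le_add (add_le_add (add_le_add (add_le_add (add_le_add hI1 hI2) hI3) hI4) hI5) hI6
      _ ≤ 8 * (6 * (ENNReal.ofReal (1000 * (1-r) * |Real.log (1-r)|) * ENNReal.ofReal 100)) := by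
          apply mul_le_mul_right
          have hAB : A * B ≤ ENNReal.ofReal (1000 * (1-r) * |Real.log (1-r)|) * ENNReal.ofReal 100 :=
            mul_le_mul' hA hB
          calc A * B + A * B + A * B + A * B + A * B + A * B = 6 * (A * B) := by ring
            _ ≤ 6 * (ENNReal.ofReal (1000 * (1-r) * |Real.log (1-r)|) * ENNReal.ofReal 100) :=
              mul_le_mul_right hAB 6
      _ ≤ ENNReal.ofReal (10000000 * (1 - r) * |Real.log (1 - r)|) := by
          have hq : (0:ℝ) ≤ 1000 * (1-r) * |Real.log (1-r)| :=
            mul_nonneg (mul_nonneg (by norm_num) hε0.le) (abs_nonneg _)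
          rw [show (8:ℝ≥0∞) = ENNReal.ofReal 8 by simp,
            show (6:ℝ≥0∞) = ENNReal.ofReal 6 by simp,
            ← ENNReal.ofReal_mul hq,
            ← ENNReal.ofReal_mul (by norm_num : (0:ℝ) ≤ 6),
            ← ENNReal.ofReal_mul (by norm_num : (0:ℝ) ≤ 8)]
          apply ENNReal.ofReal_le_ofReal
          have habs : (0:ℝ) ≤ |Real.log (1 - r)| := abs_nonneg _
          nlinarith
  have heq : hexInt (fun t => tnorm t * PKer r t)
      = (∫⁻ x in phiH ⁻¹' OmegaH,
          ENNReal.ofReal (tnorm (phiH x) * PKer r (phiH x))).toReal := by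
    unfold hexInt
    rw [integral_eq_lintegral_of_nonneg_ae (Filter.Eventually.of_forall fun x => hg0 x)
      hgm.aestronglyMeasurable]
  rw [heq]
  refine ENNReal.toReal_le_of_le_ofReal ?_ hKey
  have : (0:ℝ) ≤ |Real.log (1 - r)| := abs_nonneg _
  nlinarith
end
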